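/- arXiv:1408.4505 — 3 statements merged into one kernel-verified Lean document; each statement's English description precedes it below -/
import Mathlib

section
/- Let S be a finite set of primes each greater than log x, choose a_s uniformly and independently at random for s ∈ S, and let q_1 ≠ q_2 be integers with |q_1 - q_2| ≤ y ≤ x log x. Then the probability that both q_1 and q_2 avoid all classes a_s mod s equals (1 + o(1)) γ^2 as x → ∞, where γ = ∏_{s∈S}(1 - 1/s). -/
open scoped Classical

lemma tele_aux (h : ℕ → ℝ) (hanti : Antitone h) (m : ℕ) :
    ∀ N : ℕ, ∀ T : Finset ℕ, T ⊆ Finset.Ico m N →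
      ∑ t ∈ T, (h t - h (t + 1)) ≤ h m - h (max m N) := by
  intro N
  induction N with
  | zero => intro T hT; simp [Finset.subset_empty.mp (by simpa using hT)]
  | succ N ih =>
    intro T hT
    by_cases hN : N ∈ T
    · have hmN : m ≤ N := (Finset.mem_Ico.mp (hT hN)).1
      have hsub : T.erase N ⊆ Finset.Ico m N := by
        intro t ht
        have h1 := Finset.mem_Ico.mp (hT (Finset.mem_of_mem_erase ht))
        have h2 := Finset.ne_of_mem_erase ht
        exact Finset.mem_Ico.mpr ⟨h1.1, lt_of_le_of_ne (Nat.lt_succ_iff.mp h1.2) h2⟩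
      have := ih (T.erase N) hsub
      rw [← Finset.insert_erase hN, Finset.sum_insert (Finset.notMem_erase _ _)]
      have hmax : max m N = N := max_eq_right hmN
      have hmax' : max m (N + 1) = N + 1 := max_eq_right (by omega)
      rw [hmax] at this
      rw [hmax']
      linarith
    · have hsub : T ⊆ Finset.Ico m N := by
        intro t ht
        have h1 := Finset.mem_Ico.mp (hT ht)
        exact Finset.mem_Ico.mpr ⟨h1.1, lt_of_le_of_ne (Nat.lt_succ_iff.mp h1.2)
          (fun he => hN (he ▸ ht))⟩
      have := ih T hsub
      have : h (max m (N + 1)) ≤ h (max m N) := hanti (by omega)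
      have := ih T hsub
      linarith

lemma tele_sum (h : ℕ → ℝ) (hanti : Antitone h) (hpos : ∀ n, 0 ≤ h n) (m : ℕ)
    (T : Finset ℕ) (hT : ∀ t ∈ T, m ≤ t) : ∑ t ∈ T, (h t - h (t + 1)) ≤ h m := by
  have hsub : T ⊆ Finset.Ico m (T.sup id + 1) := by
    intro t ht
    exact Finset.mem_Ico.mpr ⟨hT t ht, Nat.lt_succ_of_le (Finset.le_sup (f := id) ht)⟩
  have := tele_aux h hanti m (T.sup id + 1) T hsub
  have := hpos (max m (T.sup id + 1))
  linarith

lemma prod_one_sub_ge (T : Finset ℕ) (f : ℕ → ℝ) (h0 : ∀ t ∈ T, 0 ≤ f t)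
    (h1 : ∀ t ∈ T, f t ≤ 1) : 1 - ∑ t ∈ T, f t ≤ ∏ t ∈ T, (1 - f t) := by
  induction T using Finset.induction with
  | empty => simp
  | insert _ _ ha ih =>
    rename_i a T
    rw [Finset.sum_insert ha, Finset.prod_insert ha]
    have hS : 0 ≤ ∑ t ∈ T, f t :=
      Finset.sum_nonneg fun t ht => h0 t (Finset.mem_insert_of_mem ht)
    have hfa0 : 0 ≤ f a := h0 a (Finset.mem_insert_self a T)
    have hfa1 : f a ≤ 1 := h1 a (Finset.mem_insert_self a T)
    have hih : 1 - ∑ t ∈ T, f t ≤ ∏ t ∈ T, (1 - f t) :=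
      ih (fun t ht => h0 t (Finset.mem_insert_of_mem ht))
        (fun t ht => h1 t (Finset.mem_insert_of_mem ht))
    nlinarith [mul_le_mul_of_nonneg_left hih (by linarith : (0:ℝ) ≤ 1 - f a)]

lemma pi_filter (S : Finset ℕ) (t : ℕ → Finset ℕ) (p : ℕ → ℕ → Prop) :
    ((S.pi fun s => t s).filter (fun a => ∀ s (hs : s ∈ S), p s (a s hs)))
      = S.pi (fun s => (t s).filter (fun n => p s n)) := by
  ext a
  simp only [Finset.mem_filter, Finset.mem_pi, forall_and]

lemma count_one (s : ℕ) (hs : 0 < s) (q : ℤ) :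
    ∀ a ∈ Finset.range s, ((s:ℤ) ∣ (q - a) ↔ a = (q % s).toNat) := by
  intro a ha
  rw [Finset.mem_range] at ha
  have hs' : (0:ℤ) < s := by exact_mod_cast hs
  have hr : (0:ℤ) ≤ q % s := Int.emod_nonneg q (by positivity)
  have hrlt : q % s < s := Int.emod_lt_of_pos q hs'
  have hqm : (s:ℤ) ∣ (q - q % s) := Int.dvd_self_sub_of_emod_eq rfl
  constructor
  · intro hd
    have h1 : (s:ℤ) ∣ (q % s - a) := by
      have h := dvd_sub hd hqm
      have he : (q - a) - (q - q % s) = q % s - a := by ring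
      rw [he] at h
      exact h
    have ha' : (a:ℤ) < s := by exact_mod_cast ha
    have h0 : (0:ℤ) ≤ a := Int.natCast_nonneg a
    have habs : |q % s - a| < s := by rw [abs_lt]; constructor <;> linarith
    have : q % s - a = 0 := Int.eq_zero_of_abs_lt_dvd h1 habs
    omega
  · intro h
    subst h
    have h2 : ((q % s).toNat : ℤ) = q % s := Int.toNat_of_nonneg hr
    rw [h2]
    exact hqm

lemma count_lemma (s : ℕ) (hs : 3 ≤ s) (q1 q2 : ℤ) :
    ((Finset.range s).filter (fun (a : ℕ) => ¬ ((s:ℤ) ∣ (q1 - (a:ℤ))) ∧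
        ¬ ((s:ℤ) ∣ (q2 - (a:ℤ))))).card
      = s - (if (s:ℤ) ∣ (q1 - q2) then 1 else 2) := by
  have hs0 : 0 < s := by omega
  set r1 := (q1 % s).toNat with hr1
  set r2 := (q2 % s).toNat with hr2
  have hfeq : ((Finset.range s).filter (fun (a : ℕ) => ¬ ((s:ℤ) ∣ (q1 - (a:ℤ))) ∧
      ¬ ((s:ℤ) ∣ (q2 - (a:ℤ))))) = Finset.range s \ {r1, r2} := by
    ext a
    simp only [Finset.mem_filter, Finset.mem_sdiff, Finset.mem_insert,
      Finset.mem_singleton]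
    constructor
    · rintro ⟨ha, h1, h2⟩
      refine ⟨ha, ?_⟩
      rw [count_one s hs0 q1 a ha] at h1
      rw [count_one s hs0 q2 a ha] at h2
      tauto
    · rintro ⟨ha, h⟩
      refine ⟨ha, ?_, ?_⟩
      · rw [count_one s hs0 q1 a ha]; tauto
      · rw [count_one s hs0 q2 a ha]; tauto
  rw [hfeq]
  have hsint : (0:ℤ) < s := by exact_mod_cast hs0
  have e1 : r1 < s := by
    have := Int.emod_lt_of_pos q1 hsint
    have := Int.emod_nonneg q1 (by positivity : (s:ℤ) ≠ 0)
    omega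
  have e2 : r2 < s := by
    have := Int.emod_lt_of_pos q2 hsint
    have := Int.emod_nonneg q2 (by positivity : (s:ℤ) ≠ 0)
    omega
  have hsub : ({r1, r2} : Finset ℕ) ⊆ Finset.range s := by
    intro t ht
    simp only [Finset.mem_insert, Finset.mem_singleton] at ht
    rcases ht with h | h <;> simp [Finset.mem_range, h, e1, e2]
  rw [Finset.card_sdiff_of_subset hsub, Finset.card_range]
  have hdvd : (s:ℤ) ∣ (q1 - q2) ↔ r1 = r2 := by
    have h1 : (s:ℤ) ∣ (q1 - q1 % s) := Int.dvd_self_sub_of_emod_eq rfl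
    have h2 : (s:ℤ) ∣ (q2 - q2 % s) := Int.dvd_self_sub_of_emod_eq rfl
    have hb1 : (0:ℤ) ≤ q1 % s := Int.emod_nonneg q1 (by positivity)
    have hb2 : (0:ℤ) ≤ q2 % s := Int.emod_nonneg q2 (by positivity)
    have hl1 : q1 % s < s := Int.emod_lt_of_pos q1 hsint
    have hl2 : q2 % s < s := Int.emod_lt_of_pos q2 hsint
    constructor
    · intro hd
      have h3 : (s:ℤ) ∣ (q1 % s - q2 % s) := by
        have h := dvd_sub (dvd_sub hd h1) (dvd_neg.mpr h2)
        have he : (q1 - q2 - (q1 - q1 % s)) - -(q2 - q2 % s) = q1 % s - q2 % s := by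
          ring
        rw [he] at h
        exact h
      have habs : |q1 % s - q2 % s| < s := by rw [abs_lt]; constructor <;> linarith
      have := Int.eq_zero_of_abs_lt_dvd h3 habs
      omega
    · intro h
      have h4 : q1 % s = q2 % s := by omega
      have h := dvd_sub h1 h2
      have he : (q1 - q1 % s) - (q2 - q2 % s) = q1 - q2 - (q1 % s - q2 % s) := by ring
      rw [he, h4] at h
      simpa using h
  by_cases hd : (s:ℤ) ∣ (q1 - q2)
  · have : r1 = r2 := hdvd.mp hd
    simp [hd, this]
  · have : r1 ≠ r2 := fun h => hd (hdvd.mpr h)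
    rw [if_neg hd, Finset.card_insert_of_notMem (by simpa using this),
      Finset.card_singleton]

set_option maxHeartbeats 2000000 in
/-- For `S` a finite set of primes each exceeding `log x`, uniform independent random
classes `a_s mod s`, and distinct integers `q₁ ≠ q₂` with `|q₁ - q₂| ≤ x log x`, the
probability that both `q₁` and `q₂` avoid all classes `a_s mod s` is
`(1+o(1)) γ²` as `x → ∞`, where `γ = ∏_{s ∈ S}(1 - 1/s)`. -/
theorem stmt_5 :
    ∀ ε : ℝ, 0 < ε → ∃ x0 : ℝ, ∀ x : ℝ, x0 ≤ x →
      ∀ S : Finset ℕ, (∀ s ∈ S, s.Prime ∧ Real.log x < s) →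
      ∀ q1 q2 : ℤ, q1 ≠ q2 → ((|q1 - q2| : ℤ) : ℝ) ≤ x * Real.log x →
        |(((S.pi fun s => Finset.range s).filter (fun a =>
              ∀ s (hs : s ∈ S), ¬ ((s : ℤ) ∣ (q1 - (a s hs : ℤ))) ∧
                ¬ ((s : ℤ) ∣ (q2 - (a s hs : ℤ))))).card : ℝ) /
            ((S.pi fun s => Finset.range s).card : ℝ) -
          (∏ s ∈ S, (1 - 1 / (s : ℝ))) ^ 2|
        ≤ ε * (∏ s ∈ S, (1 - 1 / (s : ℝ))) ^ 2 := by
  intro ε hε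
  set m : ℕ := ⌈1/ε⌉₊ with hm
  set C : ℝ := max ((m : ℝ) + 3) (max (Real.exp (4 / Real.log (1 + ε))) 10) with hC
  refine ⟨Real.exp C, ?_⟩
  intro x hx S hS q1 q2 hne hq
  set L : ℝ := Real.log x with hLdef'
  have hLdef : L = Real.log x := hLdef'
  have hC10 : (10 : ℝ) ≤ C := le_trans (le_max_right _ _) (le_max_right _ _)
  have hxpos : 0 < x := lt_of_lt_of_le (Real.exp_pos C) hx
  have hLC : C ≤ L := by
    rw [hLdef, ← Real.log_exp C]
    exact Real.log_le_log (Real.exp_pos C) hx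
  have hL10 : (10 : ℝ) ≤ L := le_trans hC10 hLC
  have hLx : L ≤ x := by rw [hLdef]; exact Real.log_le_self (le_of_lt hxpos)
  have hCm : (m : ℝ) + 3 ≤ L := le_trans (le_max_left _ _) hLC
  have hCe : Real.exp (4 / Real.log (1 + ε)) ≤ L :=
    le_trans (le_trans (le_max_left _ _) (le_max_right _ _)) hLC
  have hs11 : ∀ s ∈ S, 11 ≤ s := by
    intro s hs
    have h := (hS s hs).2
    have h' : (10 : ℝ) < (s : ℝ) := lt_of_le_of_lt hL10 h
    exact_mod_cast Nat.lt_of_lt_of_le (by exact_mod_cast h') (le_refl s)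
  have key : (((S.pi fun s => Finset.range s).filter (fun a =>
          ∀ s (hs : s ∈ S), ¬ ((s : ℤ) ∣ (q1 - (a s hs : ℤ))) ∧
            ¬ ((s : ℤ) ∣ (q2 - (a s hs : ℤ))))).card : ℝ) /
        ((S.pi fun s => Finset.range s).card : ℝ)
      = ∏ s ∈ S, (((s - (if (s:ℤ) ∣ (q1 - q2) then 1 else 2) : ℕ) : ℝ) / (s : ℝ)) := by
    have heq : ((S.pi fun s => Finset.range s).filter (fun a =>
            ∀ s (hs : s ∈ S), ¬ ((s : ℤ) ∣ (q1 - (a s hs : ℤ))) ∧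
              ¬ ((s : ℤ) ∣ (q2 - (a s hs : ℤ)))))
        = S.pi (fun s => (Finset.range s).filter (fun (n : ℕ) =>
            ¬ ((s:ℤ) ∣ (q1 - (n:ℤ))) ∧ ¬ ((s:ℤ) ∣ (q2 - (n:ℤ))))) := by
      ext a
      simp only [Finset.mem_filter, Finset.mem_pi, forall_and]
    rw [heq, Finset.card_pi, Finset.card_pi]
    have h1 : ∀ s ∈ S, ((Finset.range s).filter (fun (n : ℕ) =>
        ¬ ((s:ℤ) ∣ (q1 - (n:ℤ))) ∧ ¬ ((s:ℤ) ∣ (q2 - (n:ℤ))))).card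
        = s - (if (s:ℤ) ∣ (q1 - q2) then 1 else 2) := by
      intro s hs
      exact count_lemma s (by have := hs11 s hs; omega) q1 q2
    rw [Finset.prod_congr rfl h1]
    simp only [Finset.card_range]
    push_cast
    rw [Finset.prod_div_distrib]
  rw [key]
  set γ : ℝ := ∏ s ∈ S, (1 - 1 / (s : ℝ)) with hγdef
  set R : ℝ := ∏ s ∈ S, (((s - (if (s:ℤ) ∣ (q1 - q2) then 1 else 2) : ℕ) : ℝ) / (s : ℝ))
    with hRdef
  have hsR : ∀ s ∈ S, (11:ℝ) ≤ (s:ℝ) := fun s hs => by exact_mod_cast hs11 s hs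
  have hsL : ∀ s ∈ S, L < (s:ℝ) := fun s hs => (hS s hs).2
  have hγsq : γ ^ 2 = ∏ s ∈ S, (((s:ℝ) - 1) / (s:ℝ)) ^ 2 := by
    rw [hγdef, ← Finset.prod_pow]
    refine Finset.prod_congr rfl fun s hs => ?_
    have h0 : (s:ℝ) ≠ 0 := by have := hsR s hs; linarith
    rw [sub_div, div_self h0]
  have hγ2 : 0 ≤ γ ^ 2 := sq_nonneg γ
  have hcs : ∀ s ∈ S, ((s - (if (s:ℤ) ∣ (q1 - q2) then 1 else 2) : ℕ) : ℝ)
      = (s:ℝ) - (if (s:ℤ) ∣ (q1 - q2) then (1:ℝ) else 2) := by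
    intro s hs
    have h11 := hs11 s hs
    split_ifs <;> (rw [Nat.cast_sub (by omega)]; norm_num)
  ---- LOWER BOUND ----
  have hlow1 : ∏ s ∈ S, (((s:ℝ) - 2) / (s:ℝ)) ≤ R := by
    rw [hRdef]
    refine Finset.prod_le_prod (fun s hs => ?_) (fun s hs => ?_)
    · have := hsR s hs
      exact div_nonneg (by linarith) (by linarith)
    · have h11 := hsR s hs
      rw [hcs s hs]
      rw [div_le_div_iff₀ (by linarith) (by linarith)]
      have : (if (s:ℤ) ∣ (q1 - q2) then (1:ℝ) else 2) ≤ 2 := by split_ifs <;> norm_num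
      nlinarith
  have hlow2 : ∏ s ∈ S, (((s:ℝ) - 2) / (s:ℝ))
      = γ ^ 2 * ∏ s ∈ S, (1 - 1 / ((s:ℝ) - 1) ^ 2) := by
    rw [hγsq, ← Finset.prod_mul_distrib]
    refine Finset.prod_congr rfl fun s hs => ?_
    have h11 := hsR s hs
    have h0 : (s:ℝ) ≠ 0 := by linarith
    have h1 : (s:ℝ) - 1 ≠ 0 := by linarith
    field_simp
    ring
  -- sum bound
  have hSig : ∑ s ∈ S, (1 / ((s:ℝ) - 1) ^ 2) ≤ ε := by
    set hfun : ℕ → ℝ := fun j => 1 / ((j:ℝ) + 1) with hhdef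
    have hanti : Antitone hfun := by
      intro a b hab
      show (1:ℝ) / ((b:ℝ)+1) ≤ 1 / ((a:ℝ)+1)
      apply one_div_le_one_div_of_le (by positivity)
      have : (a:ℝ) ≤ b := by exact_mod_cast hab
      linarith
    have hposf : ∀ n, 0 ≤ hfun n := fun n => by positivity
    have hstep : ∑ s ∈ S, (1 / ((s:ℝ) - 1) ^ 2)
        ≤ ∑ s ∈ S, (hfun (s - 3) - hfun ((s - 3) + 1)) := by
      refine Finset.sum_le_sum fun s hs => ?_
      have h11 := hs11 s hs
      have hc3 : (((s - 3 : ℕ)):ℝ) = (s:ℝ) - 3 := by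
        rw [Nat.cast_sub (by omega)]; norm_num
      have hσ := hsR s hs
      have hc4 : (((s - 3 + 1 : ℕ)):ℝ) = (s:ℝ) - 2 := by
        rw [Nat.cast_add, Nat.cast_sub (by omega)]; push_cast; ring
      show 1/((s:ℝ)-1)^2 ≤ 1/(((s - 3:ℕ):ℝ)+1) - 1/(((s - 3 + 1:ℕ):ℝ)+1)
      rw [hc3, hc4]
      have e1 : (s:ℝ) - 3 + 1 = (s:ℝ) - 2 := by ring
      have e2 : (s:ℝ) - 2 + 1 = (s:ℝ) - 1 := by ring
      rw [e1, e2]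
      have hA : (s:ℝ) - 2 ≠ 0 := by linarith
      have hB : (s:ℝ) - 1 ≠ 0 := by linarith
      have key : 1 / ((s:ℝ) - 2) - 1 / ((s:ℝ) - 1) = 1 / (((s:ℝ) - 2) * ((s:ℝ) - 1)) := by
        field_simp
        ring
      rw [key]
      apply one_div_le_one_div_of_le (by nlinarith)
      nlinarith
    have himg : ∑ s ∈ S, (hfun (s - 3) - hfun ((s - 3) + 1))
        = ∑ t ∈ S.image (fun s => s - 3), (hfun t - hfun (t + 1)) := by
      rw [Finset.sum_image]
      intro a ha b hb hab
      have := hs11 a ha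
      have := hs11 b hb
      have hab' : a - 3 = b - 3 := hab
      omega
    have htel : ∑ t ∈ S.image (fun s => s - 3), (hfun t - hfun (t + 1)) ≤ hfun m := by
      refine tele_sum hfun hanti hposf m _ fun t ht => ?_
      rw [Finset.mem_image] at ht
      obtain ⟨s, hs, rfl⟩ := ht
      have h1 : ((m:ℝ)) + 3 < (s:ℝ) := lt_of_le_of_lt hCm (hsL s hs)
      have : m + 3 < s := by exact_mod_cast h1
      omega
    have hhm : hfun m ≤ ε := by
      rw [hhdef]
      simp only []
      have h1 : 1/ε ≤ (m:ℝ) := by rw [hm]; exact Nat.le_ceil _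
      have h2 : 0 < 1/ε := by positivity
      have h3 : 1 / ((m:ℝ) + 1) ≤ 1 / (1/ε) := by
        apply one_div_le_one_div_of_le h2
        linarith
      rwa [one_div_one_div] at h3
    linarith
  have hlow3 : 1 - ∑ s ∈ S, (1 / ((s:ℝ) - 1) ^ 2) ≤ ∏ s ∈ S, (1 - 1 / ((s:ℝ) - 1) ^ 2) := by
    refine prod_one_sub_ge S _ (fun s hs => by positivity) (fun s hs => ?_)
    have := hsR s hs
    rw [div_le_one (by nlinarith)]
    nlinarith
  have hlower : γ ^ 2 * (1 - ε) ≤ R := by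
    calc γ ^ 2 * (1 - ε) ≤ γ ^ 2 * (1 - ∑ s ∈ S, (1 / ((s:ℝ) - 1) ^ 2)) := by
          apply mul_le_mul_of_nonneg_left (by linarith) hγ2
      _ ≤ γ ^ 2 * ∏ s ∈ S, (1 - 1 / ((s:ℝ) - 1) ^ 2) :=
          mul_le_mul_of_nonneg_left hlow3 hγ2
      _ = ∏ s ∈ S, (((s:ℝ) - 2) / (s:ℝ)) := hlow2.symm
      _ ≤ R := hlow1
  ---- UPPER BOUND ----
  have hup1 : R ≤ γ ^ 2 * ∏ s ∈ S.filter (fun (s : ℕ) => (s:ℤ) ∣ (q1 - q2)), ((s:ℝ) / ((s:ℝ) - 1)) := by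
    have step : R ≤ ∏ s ∈ S, ((((s:ℝ) - 1) / (s:ℝ)) ^ 2 *
        (if (s:ℤ) ∣ (q1 - q2) then (s:ℝ) / ((s:ℝ) - 1) else 1)) := by
      rw [hRdef]
      refine Finset.prod_le_prod (fun s hs => ?_) (fun s hs => ?_)
      · positivity
      have h11 := hsR s hs
      rw [hcs s hs]
      split_ifs
      · have h0 : (s:ℝ) ≠ 0 := by linarith
        have h1 : (s:ℝ) - 1 ≠ 0 := by linarith
        have heq1 : (((s:ℝ) - 1) / (s:ℝ)) ^ 2 * ((s:ℝ) / ((s:ℝ) - 1)) = ((s:ℝ) - 1) / (s:ℝ) := by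
          field_simp
        rw [heq1]
      · rw [mul_one, div_pow, div_le_div_iff₀ (by linarith) (by positivity)]
        nlinarith
    have split : ∏ s ∈ S, ((((s:ℝ) - 1) / (s:ℝ)) ^ 2 *
        (if (s:ℤ) ∣ (q1 - q2) then (s:ℝ) / ((s:ℝ) - 1) else 1))
        = γ ^ 2 * ∏ s ∈ S.filter (fun (s : ℕ) => (s:ℤ) ∣ (q1 - q2)), ((s:ℝ) / ((s:ℝ) - 1)) := by
      rw [Finset.prod_mul_distrib, ← hγsq, Finset.prod_filter]
    rw [← split]
    exact step
  have hL1 : (0:ℝ) < L - 1 := by linarith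
  have hlogL : 0 < Real.log L := Real.log_pos (by linarith)
  have hup2 : ∏ s ∈ S.filter (fun (s : ℕ) => (s:ℤ) ∣ (q1 - q2)), ((s:ℝ) / ((s:ℝ) - 1)) ≤ (L / (L - 1)) ^ (S.filter (fun (s : ℕ) => (s:ℤ) ∣ (q1 - q2))).card := by
    rw [← Finset.prod_const]
    refine Finset.prod_le_prod (fun s hs => ?_) (fun s hs => ?_)
    · have := hsR s (Finset.filter_subset _ S hs)
      apply div_nonneg <;> linarith
    · have h11 := hsR s (Finset.filter_subset _ S hs)
      have hsL' := hsL s (Finset.filter_subset _ S hs)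
      rw [div_le_div_iff₀ (by linarith) hL1]
      nlinarith
  have hkbound : ((S.filter (fun (s : ℕ) => (s:ℤ) ∣ (q1 - q2))).card:ℝ) * Real.log L ≤ 2 * L := by
    have hdvd : (∏ s ∈ S.filter (fun (s : ℕ) => (s:ℤ) ∣ (q1 - q2)), s) ∣ (q1 - q2).natAbs := by
      refine Finset.prod_primes_dvd _ (fun s hs => ?_) (fun s hs => ?_)
      · exact (hS s (Finset.filter_subset _ S hs)).1.prime
      · rw [Finset.mem_filter] at hs
        exact Int.natCast_dvd.mp hs.2
    have hne0 : (q1 - q2).natAbs ≠ 0 := by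
      intro h
      apply hne
      have : q1 - q2 = 0 := Int.natAbs_eq_zero.mp h
      omega
    have hple : (∏ s ∈ S.filter (fun (s : ℕ) => (s:ℤ) ∣ (q1 - q2)), s) ≤ (q1 - q2).natAbs :=
      Nat.le_of_dvd (Nat.pos_of_ne_zero hne0) hdvd
    have hcast : ((∏ s ∈ S.filter (fun (s : ℕ) => (s:ℤ) ∣ (q1 - q2)), s : ℕ):ℝ) ≤ x * L := by
      calc ((∏ s ∈ S.filter (fun (s : ℕ) => (s:ℤ) ∣ (q1 - q2)), s : ℕ):ℝ) ≤ ((q1 - q2).natAbs : ℝ) := by exact_mod_cast hple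
        _ = ((|q1 - q2| : ℤ) : ℝ) := by rw [Nat.cast_natAbs]
        _ ≤ x * L := hq
    have hLk : L ^ (S.filter (fun (s : ℕ) => (s:ℤ) ∣ (q1 - q2))).card ≤ ((∏ s ∈ S.filter (fun (s : ℕ) => (s:ℤ) ∣ (q1 - q2)), s : ℕ):ℝ) := by
      push_cast
      rw [← Finset.prod_const]
      refine Finset.prod_le_prod (fun s hs => by linarith) (fun s hs => ?_)
      exact le_of_lt (hsL s (Finset.filter_subset _ S hs))
    have hx2 : L ^ (S.filter (fun (s : ℕ) => (s:ℤ) ∣ (q1 - q2))).card ≤ x ^ 2 := by nlinarith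
    have hlog : Real.log (L ^ (S.filter (fun (s : ℕ) => (s:ℤ) ∣ (q1 - q2))).card) ≤ Real.log (x ^ 2) :=
      Real.log_le_log (by positivity) hx2
    rw [Real.log_pow, Real.log_pow] at hlog
    have : Real.log x ≤ x := Real.log_le_self (le_of_lt hxpos)
    calc ((S.filter (fun (s : ℕ) => (s:ℤ) ∣ (q1 - q2))).card:ℝ) * Real.log L ≤ 2 * Real.log x := by exact_mod_cast hlog
      _ ≤ 2 * L := le_of_eq (by rw [hLdef])
  have hklog : ((S.filter (fun (s : ℕ) => (s:ℤ) ∣ (q1 - q2))).card:ℝ) * (1/(L-1))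
      ≤ 4 / Real.log L := by
    rw [mul_one_div, div_le_div_iff₀ hL1 hlogL]
    calc ((S.filter (fun (s : ℕ) => (s:ℤ) ∣ (q1 - q2))).card:ℝ) * Real.log L
        ≤ 2 * L := hkbound
      _ ≤ 4 * (L - 1) := by linarith
  have hl1e : 0 < Real.log (1 + ε) := Real.log_pos (by linarith)
  have hfin : 4 / Real.log L ≤ Real.log (1 + ε) := by
    have hlogL4 : 4 / Real.log (1 + ε) ≤ Real.log L := by
      calc 4 / Real.log (1+ε) = Real.log (Real.exp (4 / Real.log (1+ε))) :=
            (Real.log_exp _).symm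
        _ ≤ Real.log L := Real.log_le_log (Real.exp_pos _) hCe
    rw [div_le_iff₀ hlogL]
    rw [div_le_iff₀ hl1e] at hlogL4
    nlinarith
  have hup3 : (L/(L-1)) ^ (S.filter (fun (s : ℕ) => (s:ℤ) ∣ (q1 - q2))).card ≤ 1 + ε := by
    have hbase : L/(L-1) = 1 + 1/(L-1) := by field_simp; ring
    have h1d : (0:ℝ) ≤ 1/(L-1) := le_of_lt (by positivity)
    have hexp : 1 + 1/(L-1) ≤ Real.exp (1/(L-1)) := by
      have := Real.add_one_le_exp (1/(L-1)); linarith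
    calc (L/(L-1)) ^ (S.filter (fun (s : ℕ) => (s:ℤ) ∣ (q1 - q2))).card
        ≤ (Real.exp (1/(L-1))) ^ (S.filter (fun (s : ℕ) => (s:ℤ) ∣ (q1 - q2))).card := by
          rw [hbase]; exact pow_le_pow_left₀ (by linarith) hexp _
      _ = Real.exp (((S.filter (fun (s : ℕ) => (s:ℤ) ∣ (q1 - q2))).card:ℝ) * (1/(L-1))) :=
          (Real.exp_nat_mul _ _).symm
      _ ≤ Real.exp (Real.log (1+ε)) := Real.exp_le_exp.mpr (le_trans hklog hfin)
      _ = 1 + ε := Real.exp_log (by linarith)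
  have hupper : R ≤ γ ^ 2 * (1 + ε) :=
    le_trans hup1 (mul_le_mul_of_nonneg_left (le_trans hup2 hup3) hγ2)
  rw [abs_le]
  constructor
  · nlinarith [hlower]
  · nlinarith [hupper]
end

section
/- Fix r ≥ 1 and distinct primes p_1, p_2, each in (x/2, x]. Let S be a set of primes in (log x, z] with z ≤ x, and choose a_s uniformly and independently for s ∈ S. For an integer q and 0 ≤ i ≤ r-1, the probability that all integers q + j·r!·p_k for j ∈ {-i, 1-i, ..., r-1-i} and k ∈ {1,2} avoid every class a_s mod s equals (1+o(1)) ∏_{s∈S}(1 - (2r-1)/s), as x → ∞. -/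
open scoped Classical
open Finset
set_option maxHeartbeats 1000000

lemma pi_filter_card (S : Finset ℕ) (n : ℕ → ℕ) (P : ℕ → ℕ → Prop)
    [inst2 : ∀ s, DecidablePred (P s)] :
    ((S.pi fun s => Finset.range (n s)).filter (fun a => ∀ s (hs : s ∈ S), P s (a s hs))).card
      = ∏ s ∈ S, ((Finset.range (n s)).filter (P s)).card := by
  have h : ((S.pi fun s => Finset.range (n s)).filter (fun a => ∀ s (hs : s ∈ S), P s (a s hs)))
      = S.pi (fun s => (Finset.range (n s)).filter (P s)) := by
    ext a
    simp only [Finset.mem_filter, Finset.mem_pi]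
    constructor
    · rintro ⟨h1, h2⟩; exact fun s hs => ⟨h1 s hs, h2 s hs⟩
    · intro h; exact ⟨fun s hs => (h s hs).1, fun s hs => (h s hs).2⟩
  rw [h, Finset.card_pi]

lemma image_mod_subset_range (s : ℕ) (hs : 0 < s) (T : Finset ℤ) :
    T.image (fun t => (t % (s:ℤ)).toNat) ⊆ Finset.range s := by
  intro b hb
  simp only [Finset.mem_image] at hb
  obtain ⟨t, _, rfl⟩ := hb
  have h1 : 0 ≤ t % (s:ℤ) := Int.emod_nonneg t (by exact_mod_cast hs.ne')
  have h2 : t % (s:ℤ) < s := Int.emod_lt_of_pos t (by exact_mod_cast hs)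
  simp only [Finset.mem_range]
  omega

lemma count_avoid (s : ℕ) (hs : 0 < s) (T : Finset ℤ)
    [DecidablePred fun b : ℕ => ∀ t ∈ T, ¬ ((s:ℤ) ∣ (t - (b:ℤ)))] :
    ((Finset.range s).filter (fun b : ℕ => ∀ t ∈ T, ¬ ((s:ℤ) ∣ (t - (b:ℤ))))).card
      = s - (T.image (fun t => (t % (s:ℤ)).toNat)).card := by
  have hsub := image_mod_subset_range s hs T
  have h : ((Finset.range s).filter (fun b : ℕ => ∀ t ∈ T, ¬ ((s:ℤ) ∣ (t - (b:ℤ)))))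
      = Finset.range s \ T.image (fun t => (t % (s:ℤ)).toNat) := by
    ext b
    simp only [Finset.mem_filter, Finset.mem_sdiff, Finset.mem_image, Finset.mem_range]
    constructor
    · rintro ⟨hb, hall⟩
      refine ⟨hb, ?_⟩
      rintro ⟨t, ht, hteq⟩
      refine hall t ht ?_
      have h1 : 0 ≤ t % (s:ℤ) := Int.emod_nonneg t (by positivity)
      have hbe : (b:ℤ) = t % (s:ℤ) := by omega
      have : t % (s:ℤ) = (b:ℤ) % (s:ℤ) := by
        rw [← hbe, Int.emod_eq_of_lt (by positivity) (by exact_mod_cast hb)]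
      exact Int.ModEq.dvd (Int.ModEq.symm this)
    · rintro ⟨hb, hnone⟩
      refine ⟨hb, fun t ht hdvd => hnone ⟨t, ht, ?_⟩⟩
      have hmod : t % (s:ℤ) = (b:ℤ) % (s:ℤ) := Int.ModEq.symm (Int.modEq_iff_dvd.2 hdvd)
      have hb' : ((b:ℤ)) % (s:ℤ) = (b:ℤ) := Int.emod_eq_of_lt (by positivity) (by exact_mod_cast hb)
      rw [hmod, hb']
      simp
  rw [h, Finset.card_sdiff_of_subset hsub, Finset.card_range]

lemma card_T_le (r i : ℕ) (hr : 1 ≤ r) (hi : i ≤ r - 1) (q F P1 P2 : ℤ) :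
    (((Finset.Icc (-(i:ℤ)) ((r:ℤ)-1-(i:ℤ))).image (fun j => q + j*F*P1)) ∪
     ((Finset.Icc (-(i:ℤ)) ((r:ℤ)-1-(i:ℤ))).image (fun j => q + j*F*P2))).card ≤ 2*r - 1 := by
  set J := Finset.Icc (-(i:ℤ)) ((r:ℤ)-1-(i:ℤ)) with hJ
  set A := J.image (fun j => q + j*F*P1) with hA
  set B := J.image (fun j => q + j*F*P2) with hB
  have hJcard : J.card = r := by
    rw [hJ, Int.card_Icc]
    have : (i:ℤ) ≤ (r:ℤ) - 1 := by omega
    omega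
  have hAcard : A.card ≤ r := le_trans (Finset.card_image_le) (le_of_eq hJcard)
  have hBcard : B.card ≤ r := le_trans (Finset.card_image_le) (le_of_eq hJcard)
  have h0J : (0:ℤ) ∈ J := by
    rw [hJ, Finset.mem_Icc]
    constructor <;> omega
  have hqA : q ∈ A := by
    rw [hA, Finset.mem_image]; exact ⟨0, h0J, by ring⟩
  have hqB : q ∈ B := by
    rw [hB, Finset.mem_image]; exact ⟨0, h0J, by ring⟩
  have hinter : 1 ≤ (A ∩ B).card :=
    Finset.card_pos.2 ⟨q, Finset.mem_inter.2 ⟨hqA, hqB⟩⟩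
  have := Finset.card_union_add_card_inter A B
  omega

lemma card_image_ge (r i : ℕ) (hr : 1 ≤ r) (hi : i ≤ r - 1) (q : ℤ) (s p1 p2 : ℕ)
    (hs : s.Prime) (hp1 : p1.Prime) (hp2 : p2.Prime) (hne : p1 ≠ p2)
    (hp1big : 2*(r:ℤ) < (p1:ℤ)) (hp2big : 2*(r:ℤ) < (p2:ℤ))
    (hsF : ¬ ((s:ℤ) ∣ (r.factorial : ℤ)))
    (hsM : ∀ u v : ℤ, -(2*(r:ℤ)) ≤ u → u ≤ 2*(r:ℤ) → -(2*(r:ℤ)) ≤ v → v ≤ 2*(r:ℤ) →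
      ¬(u = 0 ∧ v = 0) → ¬ ((s:ℤ) ∣ (u * (p1:ℤ) - v * (p2:ℤ)))) :
    2*r - 1 ≤ ((((Finset.Icc (-(i:ℤ)) ((r:ℤ)-1-(i:ℤ))).image
        (fun j => q + j*(r.factorial:ℤ)*(p1:ℤ))) ∪
      ((Finset.Icc (-(i:ℤ)) ((r:ℤ)-1-(i:ℤ))).image
        (fun j => q + j*(r.factorial:ℤ)*(p2:ℤ)))).image
        (fun t => (t % (s:ℤ)).toNat)).card := by
  have hspos : 0 < s := hs.pos
  have hsPrime : Prime (s:ℤ) := (Nat.prime_iff_prime_int.1 hs)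
  have hF : (r.factorial:ℤ) ≠ 0 := by
    have : 0 < (r.factorial:ℤ) := by exact_mod_cast r.factorial_pos
    omega
  set J := Finset.Icc (-(i:ℤ)) ((r:ℤ)-1-(i:ℤ)) with hJ
  set t1 : ℤ → ℤ := fun j => q + j*(r.factorial:ℤ)*(p1:ℤ) with ht1
  set t2 : ℤ → ℤ := fun j => q + j*(r.factorial:ℤ)*(p2:ℤ) with ht2
  set A := J.image t1 with hA
  set B := J.image t2 with hB
  have hJbd : ∀ j ∈ J, -((r:ℤ)-1) ≤ j ∧ j ≤ (r:ℤ)-1 := by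
    intro j hj
    rw [hJ, Finset.mem_Icc] at hj
    omega
  -- key divisibility consequences
  have key11 : ∀ P : ℤ, ((s:ℤ) ∣ (P * (p1:ℤ))) → -(2*(r:ℤ)) ≤ P → P ≤ 2*(r:ℤ) → P = 0 := by
    intro P hdvd h1 h2
    by_contra hP
    exact hsM P 0 h1 h2 (by omega) (by omega) (by omega)
      (by rw [zero_mul, sub_zero]; exact hdvd)
  have key22 : ∀ P : ℤ, ((s:ℤ) ∣ (P * (p2:ℤ))) → -(2*(r:ℤ)) ≤ P → P ≤ 2*(r:ℤ) → P = 0 := by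
    intro P hdvd h1 h2
    by_contra hP
    refine hsM 0 (-P) (by omega) (by omega) (by omega) (by omega) (by omega) ?_
    rw [zero_mul]
    have : (0:ℤ) - (-P) * (p2:ℤ) = P * (p2:ℤ) := by ring
    rw [this]; exact hdvd
  have key12 : ∀ u v : ℤ, ((s:ℤ) ∣ (u * (p1:ℤ) - v * (p2:ℤ))) →
      -(2*(r:ℤ)) ≤ u → u ≤ 2*(r:ℤ) → -(2*(r:ℤ)) ≤ v → v ≤ 2*(r:ℤ) → u = 0 ∧ v = 0 := by
    intro u v hdvd h1 h2 h3 h4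
    by_contra huv
    exact hsM u v h1 h2 h3 h4 (by tauto) hdvd
  -- injectivity of reduction mod s on A ∪ B
  have hinj : Set.InjOn (fun t : ℤ => (t % (s:ℤ)).toNat) ↑(A ∪ B) := by
    intro t ht t' ht' hf
    simp only at hf
    have hnn : 0 ≤ t % (s:ℤ) := Int.emod_nonneg t (by positivity)
    have hnn' : 0 ≤ t' % (s:ℤ) := Int.emod_nonneg t' (by positivity)
    have hmod : t % (s:ℤ) = t' % (s:ℤ) := by omega
    have hdvd : (s:ℤ) ∣ t - t' := Int.ModEq.dvd (Int.ModEq.symm hmod)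
    -- reduce: s ∣ F * (...) ⇒ s ∣ (...)
    have hred : ∀ w : ℤ, ((s:ℤ) ∣ (r.factorial:ℤ) * w) → (s:ℤ) ∣ w := by
      intro w hw
      rcases hsPrime.dvd_mul.1 hw with h | h
      · exact absurd h hsF
      · exact h
    simp only [hA, hB, Finset.coe_union, Set.mem_union, Finset.coe_image,
      Set.mem_image, Finset.mem_coe] at ht ht'
    rcases ht with ⟨j, hj, rfl⟩ | ⟨j, hj, rfl⟩ <;>
      rcases ht' with ⟨j', hj', rfl⟩ | ⟨j', hj', rfl⟩
    · -- both in A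
      obtain ⟨hjl, hjr⟩ := hJbd j hj
      obtain ⟨hjl', hjr'⟩ := hJbd j' hj'
      have : (s:ℤ) ∣ (j - j') * (p1:ℤ) := by
        refine hred _ ?_
        have : t1 j - t1 j' = (r.factorial:ℤ) * ((j - j') * (p1:ℤ)) := by
          simp only [ht1]; ring
        rwa [this] at hdvd
      have := key11 (j - j') this (by omega) (by omega)
      have : j = j' := by omega
      rw [this]
    · -- t in A, t' in B
      obtain ⟨hjl, hjr⟩ := hJbd j hj
      obtain ⟨hjl', hjr'⟩ := hJbd j' hj'
      have : (s:ℤ) ∣ j * (p1:ℤ) - j' * (p2:ℤ) := by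
        refine hred _ ?_
        have : t1 j - t2 j' = (r.factorial:ℤ) * (j * (p1:ℤ) - j' * (p2:ℤ)) := by
          simp only [ht1, ht2]; ring
        rwa [this] at hdvd
      obtain ⟨h1, h2⟩ := key12 j j' this (by omega) (by omega) (by omega) (by omega)
      rw [h1, h2]
      simp only [ht1, ht2]; ring
    · -- t in B, t' in A
      obtain ⟨hjl, hjr⟩ := hJbd j hj
      obtain ⟨hjl', hjr'⟩ := hJbd j' hj'
      have hdvd' : (s:ℤ) ∣ t1 j' - t2 j := by
        have h := dvd_neg.2 hdvd
        rwa [neg_sub] at h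
      have : (s:ℤ) ∣ j' * (p1:ℤ) - j * (p2:ℤ) := by
        refine hred _ ?_
        have : t1 j' - t2 j = (r.factorial:ℤ) * (j' * (p1:ℤ) - j * (p2:ℤ)) := by
          simp only [ht1, ht2]; ring
        rwa [this] at hdvd'
      obtain ⟨h1, h2⟩ := key12 j' j this (by omega) (by omega) (by omega) (by omega)
      rw [h1, h2]
      simp only [ht1, ht2]; ring
    · -- both in B
      obtain ⟨hjl, hjr⟩ := hJbd j hj
      obtain ⟨hjl', hjr'⟩ := hJbd j' hj'
      have : (s:ℤ) ∣ (j - j') * (p2:ℤ) := by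
        refine hred _ ?_
        have : t2 j - t2 j' = (r.factorial:ℤ) * ((j - j') * (p2:ℤ)) := by
          simp only [ht2]; ring
        rwa [this] at hdvd
      have := key22 (j - j') this (by omega) (by omega)
      have : j = j' := by omega
      rw [this]
  rw [Finset.card_image_of_injOn hinj]
  -- now bound (A ∪ B).card from below
  have hJcard : J.card = r := by
    rw [hJ, Int.card_Icc]
    have : (i:ℤ) ≤ (r:ℤ) - 1 := by omega
    omega
  have hAcard : A.card = r := by
    rw [hA, Finset.card_image_of_injOn, hJcard]
    intro j _ j' _ h
    simp only [ht1] at h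
    have hFp : (r.factorial:ℤ) * (p1:ℤ) ≠ 0 := by
      have h1 : 0 < (r.factorial:ℤ) := by exact_mod_cast r.factorial_pos
      have h2 : 0 < (p1:ℤ) := by exact_mod_cast hp1.pos
      positivity
    have h' := add_left_cancel h
    have : j * ((r.factorial:ℤ) * (p1:ℤ)) = j' * ((r.factorial:ℤ) * (p1:ℤ)) := by
      linear_combination h'
    exact mul_right_cancel₀ hFp this
  have hBcard : B.card = r := by
    rw [hB, Finset.card_image_of_injOn, hJcard]
    intro j _ j' _ h
    simp only [ht2] at h
    have hFp : (r.factorial:ℤ) * (p2:ℤ) ≠ 0 := by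
      have h1 : 0 < (r.factorial:ℤ) := by exact_mod_cast r.factorial_pos
      have h2 : 0 < (p2:ℤ) := by exact_mod_cast hp2.pos
      positivity
    have h' := add_left_cancel h
    have : j * ((r.factorial:ℤ) * (p2:ℤ)) = j' * ((r.factorial:ℤ) * (p2:ℤ)) := by
      linear_combination h'
    exact mul_right_cancel₀ hFp this
  have hintersub : A ∩ B ⊆ {q} := by
    intro t ht
    rw [Finset.mem_inter] at ht
    obtain ⟨htA, htB⟩ := ht
    rw [hA, Finset.mem_image] at htA
    rw [hB, Finset.mem_image] at htB
    obtain ⟨j, hj, hje⟩ := htA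
    obtain ⟨j', hj', hje'⟩ := htB
    obtain ⟨hjl, hjr⟩ := hJbd j hj
    obtain ⟨hjl', hjr'⟩ := hJbd j' hj'
    have heq : j * (p1:ℤ) = j' * (p2:ℤ) := by
      have h1 : t1 j = t2 j' := by rw [hje, hje']
      simp only [ht1, ht2] at h1
      have h1' := add_left_cancel h1
      have h2 : (r.factorial:ℤ) * (j * (p1:ℤ)) = (r.factorial:ℤ) * (j' * (p2:ℤ)) := by
        linear_combination h1'
      exact mul_left_cancel₀ hF h2
    have hp1dvd : (p1:ℤ) ∣ j' * (p2:ℤ) := ⟨j, by rw [← heq]; ring⟩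
    have hp1p : Prime (p1:ℤ) := (Nat.prime_iff_prime_int.1 hp1)
    have hj'0 : j' = 0 := by
      rcases hp1p.dvd_mul.1 hp1dvd with h | h
      · by_contra hj'ne
        have := Int.le_of_dvd (abs_pos.2 hj'ne) ((dvd_abs _ _).2 h)
        have habs : |j'| ≤ (r:ℤ) - 1 := abs_le.2 ⟨by omega, by omega⟩
        omega
      · exfalso
        have : (p1:ℕ) ∣ p2 := by exact_mod_cast h
        exact hne ((Nat.prime_dvd_prime_iff_eq hp1 hp2).1 this)
    have hj0 : j = 0 := by
      rw [hj'0, zero_mul] at heq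
      have hp1pos : 0 < (p1:ℤ) := by exact_mod_cast hp1.pos
      rcases mul_eq_zero.1 heq with h | h
      · exact h
      · exact absurd h (by omega)
    rw [Finset.mem_singleton, ← hje, ht1, hj0]
    ring
  have hintercard : (A ∩ B).card ≤ 1 := by
    have := Finset.card_le_card hintersub
    simpa using this
  have := Finset.card_union_add_card_inter A B
  omega

/-- For distinct primes `p₁, p₂ ∈ (x/2, x]`, a finite set `S` of primes in
`(log x, z]` with `z ≤ x`, classes `a_s` uniform and independent, an integer `q` and
`0 ≤ i ≤ r-1`, the probability that all integers `q + j·r!·p_k` for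
`j ∈ {-i,...,r-1-i}` and `k ∈ {1,2}` avoid every class `a_s mod s` is
`(1+o(1)) ∏_{s ∈ S}(1 - (2r-1)/s)` as `x → ∞`. -/
theorem stmt_8 (r : ℕ) (hr : 1 ≤ r) :
    ∀ ε : ℝ, 0 < ε → ∃ x0 : ℝ, ∀ x : ℝ, x0 ≤ x → ∀ z : ℝ, z ≤ x →
      ∀ S : Finset ℕ, (∀ s ∈ S, s.Prime ∧ Real.log x < (s : ℝ) ∧ (s : ℝ) ≤ z) →
      ∀ p1 p2 : ℕ, p1.Prime → p2.Prime → p1 ≠ p2 →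
        x / 2 < (p1 : ℝ) → (p1 : ℝ) ≤ x → x / 2 < (p2 : ℝ) → (p2 : ℝ) ≤ x →
      ∀ q : ℤ, ∀ i : ℕ, i ≤ r - 1 →
        abs ((((S.pi fun s => Finset.range s).filter (fun a =>
              ∀ s (hs : s ∈ S), ∀ j : ℤ, -(i : ℤ) ≤ j → j ≤ (r : ℤ) - 1 - (i : ℤ) →
                ¬ ((s : ℤ) ∣ (q + j * (r.factorial : ℤ) * (p1 : ℤ) - (a s hs : ℤ))) ∧
                ¬ ((s : ℤ) ∣ (q + j * (r.factorial : ℤ) * (p2 : ℤ) - (a s hs : ℤ))))).card : ℝ) /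
            ((S.pi fun s => Finset.range s).card : ℝ) -
            ∏ s ∈ S, (1 - (2 * (r : ℝ) - 1) / (s : ℝ)))
          ≤ ε * ∏ s ∈ S, (1 - (2 * (r : ℝ) - 1) / (s : ℝ)) := by
  intro ε hε
  -- abbreviations
  set m : ℝ := 2 * (r : ℝ) - 1 with hm
  set K : ℕ := (4 * r + 1) ^ 2 with hK
  have hlog1ε : 0 < Real.log (1 + ε) := Real.log_pos (by linarith)
  have hm1 : 1 ≤ m := by
    have : (1:ℝ) ≤ (r:ℝ) := by exact_mod_cast hr
    simp only [hm]; linarith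
  set A : ℝ := (r.factorial : ℝ) + 2 * m + (4 * (r:ℝ) + 2) + 4 * m * (K:ℝ) / Real.log (1 + ε) + 1
    with hA
  have hA1 : 1 ≤ A := by
    have h1 : (0:ℝ) ≤ (r.factorial : ℝ) := by positivity
    have h2 : (0:ℝ) ≤ 4 * m * (K:ℝ) / Real.log (1 + ε) := by positivity
    have h3 : (0:ℝ) ≤ (r:ℝ) := by positivity
    simp only [hA]; linarith
  refine ⟨Real.exp (Real.exp A), ?_⟩
  intro x hx z hz S hS p1 p2 hp1 hp2 hp12 hp1l hp1u hp2l hp2u q i hi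
  set L : ℝ := Real.log x with hL
  have hxpos : (0:ℝ) < x := lt_of_lt_of_le (Real.exp_pos _) hx
  have hLA : Real.exp A ≤ L := by
    have := Real.log_le_log (Real.exp_pos _) hx
    rwa [Real.log_exp] at this
  have hLA1 : A + 1 ≤ L := le_trans (by linarith [Real.add_one_le_exp A]) hLA
  have hlogL : A ≤ Real.log L := by
    have h0 : (0:ℝ) < Real.exp A := Real.exp_pos _
    have := Real.log_le_log h0 hLA
    rwa [Real.log_exp] at this
  have hxA : A + 1 ≤ x := by
    have h1 : Real.exp A + 1 ≤ Real.exp (Real.exp A) := by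
      linarith [Real.add_one_le_exp (Real.exp A)]
    linarith [Real.add_one_le_exp A]
  -- largeness of primes in S
  have hsL : ∀ s ∈ S, L < (s:ℝ) := fun s hs => (hS s hs).2.1
  have hsprime : ∀ s ∈ S, s.Prime := fun s hs => (hS s hs).1
  have hsm : ∀ s ∈ S, 2 * m + 1 ≤ (s:ℝ) := by
    intro s hs
    have := hsL s hs
    simp only [hA] at hLA1
    have h1 : (0:ℝ) ≤ (r.factorial : ℝ) := by positivity
    have h2 : (0:ℝ) ≤ 4 * m * (K:ℝ) / Real.log (1 + ε) := by positivity
    have h3 : (0:ℝ) ≤ (r:ℝ) := by positivity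
    linarith
  -- p1, p2 are large
  have hp1big : 2 * (r:ℤ) < (p1:ℤ) := by
    have hx2 : (4 * (r:ℝ) + 2) / 2 < (p1:ℝ) := by
      refine lt_of_le_of_lt ?_ hp1l
      have h1 : (0:ℝ) ≤ (r.factorial : ℝ) := by positivity
      have h2 : (0:ℝ) ≤ 4 * m * (K:ℝ) / Real.log (1 + ε) := by positivity
      simp only [hA] at hxA
      linarith
    have : 2 * (r:ℝ) < (p1:ℝ) := by linarith
    exact_mod_cast this
  have hp2big : 2 * (r:ℤ) < (p2:ℤ) := by
    have hx2 : (4 * (r:ℝ) + 2) / 2 < (p2:ℝ) := by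
      refine lt_of_le_of_lt ?_ hp2l
      have h1 : (0:ℝ) ≤ (r.factorial : ℝ) := by positivity
      have h2 : (0:ℝ) ≤ 4 * m * (K:ℝ) / Real.log (1 + ε) := by positivity
      simp only [hA] at hxA
      linarith
    have : 2 * (r:ℝ) < (p2:ℝ) := by linarith
    exact_mod_cast this
  -- primes in S do not divide r!
  have hsF : ∀ s ∈ S, ¬ ((s:ℤ) ∣ (r.factorial : ℤ)) := by
    intro s hs hdvd
    have h1 : (r.factorial:ℝ) < (s:ℝ) := by
      have h2 : (0:ℝ) ≤ 4 * m * (K:ℝ) / Real.log (1 + ε) := by positivity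
      have h3 : (0:ℝ) ≤ (r:ℝ) := by positivity
      have := hsL s hs
      simp only [hA] at hLA1
      linarith
    have h2 : s ∣ r.factorial := by exact_mod_cast hdvd
    have h3 : s ≤ r.factorial := Nat.le_of_dvd r.factorial_pos h2
    have : (s:ℝ) ≤ (r.factorial:ℝ) := by exact_mod_cast h3
    linarith
  -- the bad product M
  set box : Finset (ℤ × ℤ) :=
    ((Finset.Icc (-(2*(r:ℤ))) (2*(r:ℤ)) ×ˢ Finset.Icc (-(2*(r:ℤ))) (2*(r:ℤ))).erase (0,0))
    with hbox
  set M : ℤ := ∏ p ∈ box, (p.1 * (p1:ℤ) - p.2 * (p2:ℤ)) with hM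
  have hfactor_ne : ∀ u v : ℤ, -(2*(r:ℤ)) ≤ u → u ≤ 2*(r:ℤ) → -(2*(r:ℤ)) ≤ v → v ≤ 2*(r:ℤ) →
      ¬(u = 0 ∧ v = 0) → u * (p1:ℤ) - v * (p2:ℤ) ≠ 0 := by
    intro u v h1 h2 h3 h4 huv heq
    have heq' : u * (p1:ℤ) = v * (p2:ℤ) := by linarith
    have hp1p : Prime (p1:ℤ) := Nat.prime_iff_prime_int.1 hp1
    have hdvd : (p1:ℤ) ∣ v * (p2:ℤ) := ⟨u, by rw [← heq']; ring⟩
    have hv0 : v = 0 := by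
      rcases hp1p.dvd_mul.1 hdvd with h | h
      · by_contra hvne
        have := Int.le_of_dvd (abs_pos.2 hvne) ((dvd_abs _ _).2 h)
        have habs : |v| ≤ 2*(r:ℤ) := abs_le.2 ⟨h3, h4⟩
        omega
      · exfalso
        have : (p1:ℕ) ∣ p2 := by exact_mod_cast h
        exact hp12 ((Nat.prime_dvd_prime_iff_eq hp1 hp2).1 this)
    have hu0 : u = 0 := by
      rw [hv0, zero_mul] at heq'
      have hp1pos : 0 < (p1:ℤ) := by exact_mod_cast hp1.pos
      rcases mul_eq_zero.1 heq' with h | h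
      · exact h
      · omega
    exact huv ⟨hu0, hv0⟩
  have hM0 : M ≠ 0 := by
    rw [hM]
    rw [Finset.prod_ne_zero_iff]
    intro p hp
    rw [hbox, Finset.mem_erase, Finset.mem_product, Finset.mem_Icc, Finset.mem_Icc] at hp
    refine hfactor_ne p.1 p.2 hp.2.1.1 hp.2.1.2 hp.2.2.1 hp.2.2.2 ?_
    intro ⟨h1, h2⟩
    exact hp.1 (Prod.ext h1 h2)
  -- |M| ≤ (4rx)^K
  have h4rx1 : (1:ℝ) ≤ 4 * (r:ℝ) * x := by
    have h1 : (1:ℝ) ≤ (r:ℝ) := by exact_mod_cast hr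
    have h2 : (1:ℝ) ≤ x := by linarith
    nlinarith
  have hMabs : ((M.natAbs : ℝ)) ≤ (4 * (r:ℝ) * x) ^ K := by
    have hboxcard : box.card ≤ K := by
      rw [hbox, hK]
      refine le_trans (Finset.card_erase_le) ?_
      rw [Finset.card_product, Int.card_Icc]
      have : (2*(r:ℤ) + 1 - -(2*(r:ℤ))).toNat = 4*r+1 := by omega
      rw [this]
      ring_nf
      omega
    have habs : ((M.natAbs : ℝ)) = |∏ p ∈ box, ((p.1 * (p1:ℤ) - p.2 * (p2:ℤ) : ℤ) : ℝ)| := by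
      rw [hM]
      push_cast [Nat.cast_natAbs]
      simp
    rw [habs, Finset.abs_prod]
    have hstep : ∏ p ∈ box, |((p.1 * (p1:ℤ) - p.2 * (p2:ℤ) : ℤ) : ℝ)|
        ≤ ∏ _p ∈ box, (4 * (r:ℝ) * x) := by
      refine Finset.prod_le_prod (fun p _ => abs_nonneg _) ?_
      intro p hp
      rw [hbox, Finset.mem_erase, Finset.mem_product, Finset.mem_Icc, Finset.mem_Icc] at hp
      obtain ⟨-, ⟨⟨h1, h2⟩, h3, h4⟩⟩ := hp
      have hb1 : |(p.1 : ℝ)| ≤ 2 * (r:ℝ) := by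
        rw [abs_le]; constructor <;> [exact_mod_cast h1; exact_mod_cast h2]
      have hb2 : |(p.2 : ℝ)| ≤ 2 * (r:ℝ) := by
        rw [abs_le]; constructor <;> [exact_mod_cast h3; exact_mod_cast h4]
      have hpp1 : (0:ℝ) < (p1:ℝ) := by exact_mod_cast hp1.pos
      have hpp2 : (0:ℝ) < (p2:ℝ) := by exact_mod_cast hp2.pos
      push_cast
      refine le_trans (abs_sub _ _) ?_
      rw [abs_mul, abs_mul, abs_of_nonneg hpp1.le, abs_of_nonneg hpp2.le]
      have e1 : |(p.1:ℝ)| * (p1:ℝ) ≤ 2*(r:ℝ) * x :=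
        mul_le_mul hb1 hp1u hpp1.le (by positivity)
      have e2 : |(p.2:ℝ)| * (p2:ℝ) ≤ 2*(r:ℝ) * x :=
        mul_le_mul hb2 hp2u hpp2.le (by positivity)
      linarith
    refine le_trans hstep ?_
    rw [Finset.prod_const]
    exact pow_le_pow_right₀ h4rx1 hboxcard
  -- bad set
  set Bad : Finset ℕ := S.filter (fun s => (s:ℤ) ∣ M) with hBad
  have hBadcard : (Bad.card : ℝ) * Real.log L ≤ (K:ℝ) * Real.log (4 * (r:ℝ) * x) := by
    have hdvdN : (∏ s ∈ Bad, s) ∣ M.natAbs := by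
      refine Finset.prod_primes_dvd M.natAbs ?_ ?_
      · intro p hp
        rw [hBad, Finset.mem_filter] at hp
        exact (hsprime p hp.1).prime
      · intro p hp
        rw [hBad, Finset.mem_filter] at hp
        have : (p:ℤ) ∣ M := hp.2
        exact Int.ofNat_dvd_right.1 (Int.dvd_natAbs.2 this)
    have hNpos : 0 < M.natAbs := Int.natAbs_pos.2 hM0
    have hprodle : (∏ s ∈ Bad, s) ≤ M.natAbs := Nat.le_of_dvd hNpos hdvdN
    have hL1 : (1:ℝ) < L := by linarith
    have hLpow : L ^ Bad.card ≤ ((∏ s ∈ Bad, s : ℕ) : ℝ) := by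
      push_cast
      rw [← Finset.prod_const]
      refine Finset.prod_le_prod (fun _ _ => by linarith) ?_
      intro s hs
      rw [hBad, Finset.mem_filter] at hs
      exact (hsL s hs.1).le
    have hchain : L ^ Bad.card ≤ (4 * (r:ℝ) * x) ^ K := by
      refine le_trans hLpow (le_trans ?_ hMabs)
      exact_mod_cast hprodle
    have hlogchain := Real.log_le_log (by positivity) hchain
    rwa [Real.log_pow, Real.log_pow] at hlogchain
  -- the shifted sets
  set J : Finset ℤ := Finset.Icc (-(i:ℤ)) ((r:ℤ)-1-(i:ℤ)) with hJ
  set T : Finset ℤ := (J.image (fun j => q + j*(r.factorial:ℤ)*(p1:ℤ))) ∪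
      (J.image (fun j => q + j*(r.factorial:ℤ)*(p2:ℤ))) with hT
  set e : ℕ → ℕ := fun s => (T.image (fun t => (t % (s:ℤ)).toNat)).card with he
  have hes_le : ∀ s ∈ S, e s ≤ s := by
    intro s hs
    have := Finset.card_le_card (image_mod_subset_range s (hsprime s hs).pos T)
    simpa using this
  have hes_m : ∀ s ∈ S, e s ≤ 2*r - 1 := by
    intro s hs
    rw [he]
    refine le_trans Finset.card_image_le ?_
    rw [hT, hJ]
    exact card_T_le r i hr hi q _ _ _
  -- the numerator counts
  have hNum : (((S.pi fun s => Finset.range s).filter (fun a =>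
              ∀ s (hs : s ∈ S), ∀ j : ℤ, -(i : ℤ) ≤ j → j ≤ (r : ℤ) - 1 - (i : ℤ) →
                ¬ ((s : ℤ) ∣ (q + j * (r.factorial : ℤ) * (p1 : ℤ) - (a s hs : ℤ))) ∧
                ¬ ((s : ℤ) ∣ (q + j * (r.factorial : ℤ) * (p2 : ℤ) - (a s hs : ℤ))))).card)
      = ∏ s ∈ S, (s - e s) := by
    refine (pi_filter_card S (fun s => s)
      (fun s b => ∀ j : ℤ, -(i : ℤ) ≤ j → j ≤ (r : ℤ) - 1 - (i : ℤ) →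
        ¬ ((s : ℤ) ∣ (q + j * (r.factorial : ℤ) * (p1 : ℤ) - (b : ℤ))) ∧
        ¬ ((s : ℤ) ∣ (q + j * (r.factorial : ℤ) * (p2 : ℤ) - (b : ℤ))))).trans ?_
    refine Finset.prod_congr rfl ?_
    intro s hs
    rw [← count_avoid s (hsprime s hs).pos T]
    refine congrArg Finset.card (Finset.filter_congr ?_)
    intro b _
    constructor
    · intro hcond t ht
      rw [hT, Finset.mem_union, Finset.mem_image, Finset.mem_image] at ht
      rcases ht with ⟨j, hj, rfl⟩ | ⟨j, hj, rfl⟩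
      · rw [hJ, Finset.mem_Icc] at hj; exact (hcond j hj.1 hj.2).1
      · rw [hJ, Finset.mem_Icc] at hj; exact (hcond j hj.1 hj.2).2
    · intro hT' j hj1 hj2
      have hjJ : j ∈ J := by rw [hJ, Finset.mem_Icc]; exact ⟨hj1, hj2⟩
      constructor
      · exact hT' _ (Finset.mem_union_left _ (Finset.mem_image_of_mem _ hjJ))
      · exact hT' _ (Finset.mem_union_right _ (Finset.mem_image_of_mem _ hjJ))
  have hDen : ((S.pi fun s => Finset.range s).card) = ∏ s ∈ S, s := by
    rw [Finset.card_pi]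
    exact Finset.prod_congr rfl fun s _ => Finset.card_range s
  -- real form of the probability
  set G : ℝ := ∏ s ∈ S, (1 - m/(s:ℝ)) with hG
  have hspos : ∀ s ∈ S, (0:ℝ) < (s:ℝ) := by
    intro s hs; exact_mod_cast (hsprime s hs).pos
  have hm0 : (0:ℝ) ≤ m := by linarith
  have hGfac : ∀ s ∈ S, (0:ℝ) < 1 - m/(s:ℝ) := by
    intro s hs
    have h1 := hsm s hs
    have h2 := hspos s hs
    rw [sub_pos, div_lt_one h2]
    linarith
  have hGpos : (0:ℝ) < G := Finset.prod_pos hGfac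
  have hcastm : ((2*r-1:ℕ):ℝ) = m := by
    have h2r : (1:ℕ) ≤ 2*r := le_trans hr (Nat.le_mul_of_pos_left r (by norm_num))
    rw [Nat.cast_sub h2r]
    push_cast
    rw [hm]
  have hesm' : ∀ s ∈ S, ((e s:ℕ):ℝ) ≤ m := by
    intro s hs
    rw [← hcastm]
    exact_mod_cast hes_m s hs
  have hesle' : ∀ s ∈ S, ((e s:ℕ):ℝ) ≤ (s:ℝ) := by
    intro s hs; exact_mod_cast hes_le s hs
  set Q : ℝ := ∏ s ∈ S, (((s:ℝ) - (e s:ℝ))/(s:ℝ)) with hQ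
  have hQeq : ((∏ s ∈ S, (s - e s) : ℕ):ℝ) / ((∏ s ∈ S, s : ℕ):ℝ) = Q := by
    rw [Nat.cast_prod, Nat.cast_prod, ← Finset.prod_div_distrib, hQ]
    exact Finset.prod_congr rfl fun s hs => by rw [Nat.cast_sub (hes_le s hs)]
  -- lower bound
  have hGQ : G ≤ Q := by
    rw [hG, hQ]
    refine Finset.prod_le_prod (fun s hs => (hGfac s hs).le) ?_
    intro s hs
    have h2 := hspos s hs
    have heq : 1 - m/(s:ℝ) = ((s:ℝ) - m)/(s:ℝ) := by field_simp
    rw [heq, div_le_div_iff_of_pos_right h2]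
    linarith [hesm' s hs]
  -- upper bound
  have hLm : 0 < L - m := by
    have h1 : (0:ℝ) ≤ (r.factorial : ℝ) := by positivity
    have h2 : (0:ℝ) ≤ 4 * m * (K:ℝ) / Real.log (1 + ε) := by positivity
    have h3 : (0:ℝ) ≤ (r:ℝ) := by positivity
    simp only [hA] at hLA1
    linarith
  have hL2m : 2*m ≤ L := by
    have h1 : (0:ℝ) ≤ (r.factorial : ℝ) := by positivity
    have h2 : (0:ℝ) ≤ 4 * m * (K:ℝ) / Real.log (1 + ε) := by positivity
    have h3 : (0:ℝ) ≤ (r:ℝ) := by positivity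
    simp only [hA] at hLA1
    linarith
  set D : ℝ := 1 + m/(L - m) with hD
  have hD1 : (1:ℝ) ≤ D := by
    have : 0 ≤ m/(L-m) := div_nonneg hm0 hLm.le
    rw [hD]; linarith
  have hpointwise : ∀ s ∈ S, ((s:ℝ) - (e s:ℝ))/(s:ℝ)
      ≤ (1 - m/(s:ℝ)) * (if (s:ℤ) ∣ M then D else 1) := by
    intro s hs
    have hs0 := hspos s hs
    have hsL' := hsL s hs
    by_cases hb : (s:ℤ) ∣ M
    · rw [if_pos hb]
      have h1 : ((s:ℝ) - (e s:ℝ))/(s:ℝ) ≤ 1 := by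
        rw [div_le_one hs0]
        have : (0:ℝ) ≤ (e s : ℝ) := by positivity
        linarith
      have hsub0 : 0 < (s:ℝ) - m := by linarith [hsm s hs]
      have h2 : (1 - m/(s:ℝ)) * (1 + m/((s:ℝ)-m)) = 1 := by
        field_simp
        ring
      have h3 : m/((s:ℝ)-m) ≤ m/(L-m) := by
        apply div_le_div_of_nonneg_left hm0 hLm
        linarith
      calc ((s:ℝ) - (e s:ℝ))/(s:ℝ) ≤ 1 := h1
        _ = (1 - m/(s:ℝ)) * (1 + m/((s:ℝ)-m)) := h2.symm
        _ ≤ (1 - m/(s:ℝ)) * D := by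
            apply mul_le_mul_of_nonneg_left _ (hGfac s hs).le
            rw [hD]; linarith
    · rw [if_neg hb, mul_one]
      have hgood : 2*r - 1 ≤ e s := by
        have hsM : ∀ u v : ℤ, -(2*(r:ℤ)) ≤ u → u ≤ 2*(r:ℤ) → -(2*(r:ℤ)) ≤ v → v ≤ 2*(r:ℤ) →
            ¬(u = 0 ∧ v = 0) → ¬ ((s:ℤ) ∣ (u * (p1:ℤ) - v * (p2:ℤ))) := by
          intro u v h1 h2 h3 h4 h5 hdvd
          apply hb
          refine dvd_trans hdvd ?_
          rw [hM]
          have hmem : ((u,v) : ℤ × ℤ) ∈ box := by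
            rw [hbox, Finset.mem_erase, Finset.mem_product, Finset.mem_Icc, Finset.mem_Icc]
            refine ⟨?_, ⟨h1, h2⟩, h3, h4⟩
            intro hE
            exact h5 ⟨congrArg Prod.fst hE, congrArg Prod.snd hE⟩
          simpa using Finset.dvd_prod_of_mem (fun p : ℤ × ℤ => p.1 * (p1:ℤ) - p.2 * (p2:ℤ)) hmem
        have hcg := card_image_ge r i hr hi q s p1 p2 (hsprime s hs) hp1 hp2 hp12
          hp1big hp2big (hsF s hs) hsM
        rw [he]
        simp only [hT, hJ]
        exact hcg
      have hgood' : m ≤ (e s : ℝ) := by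
        rw [← hcastm]
        exact_mod_cast hgood
      rw [div_le_iff₀ hs0] -- (s - e)/s ≤ (1 - m/s) ↔ s - e ≤ (1-m/s)*s
      have heq2 : (1 - m/(s:ℝ)) * (s:ℝ) = (s:ℝ) - m := by field_simp
      rw [heq2]
      linarith
  have hQle : Q ≤ G * D ^ Bad.card := by
    have step1 : Q ≤ ∏ s ∈ S, ((1 - m/(s:ℝ)) * (if (s:ℤ) ∣ M then D else 1)) := by
      rw [hQ]
      refine Finset.prod_le_prod ?_ hpointwise
      intro s hs
      have h1 := hesle' s hs
      have h2 := hspos s hs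
      exact div_nonneg (by linarith) h2.le
    have step2 : ∏ s ∈ S, ((1 - m/(s:ℝ)) * (if (s:ℤ) ∣ M then D else 1))
        = G * ∏ s ∈ S, (if (s:ℤ) ∣ M then D else 1) := by
      rw [Finset.prod_mul_distrib, hG]
    have step3 : ∏ s ∈ S, (if (s:ℤ) ∣ M then D else 1) = D ^ Bad.card := by
      rw [Finset.prod_ite, Finset.prod_const, Finset.prod_const_one, mul_one, hBad]
    rw [step2, step3] at step1
    exact step1
  -- bound D ^ Bad.card
  have hlogL0 : (0:ℝ) < Real.log L := lt_of_lt_of_le (by linarith) hlogL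
  have hr1 : (1:ℝ) ≤ (r:ℝ) := by exact_mod_cast hr
  have hlog4rx : Real.log (4*(r:ℝ)*x) ≤ 2*L := by
    rw [Real.log_mul (by positivity) (ne_of_gt hxpos)]
    have h4rx : (4*(r:ℝ)) ≤ x := by
      have h1 : (0:ℝ) ≤ (r.factorial : ℝ) := by positivity
      have h2 : (0:ℝ) ≤ 4 * m * (K:ℝ) / Real.log (1 + ε) := by positivity
      simp only [hA] at hxA
      linarith
    have h5 : Real.log (4*(r:ℝ)) ≤ L := by
      rw [hL]
      exact Real.log_le_log (by positivity) h4rx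
    linarith
  have hBcardle : (Bad.card : ℝ) ≤ 2*(K:ℝ)*L / Real.log L := by
    rw [le_div_iff₀ hlogL0]
    calc (Bad.card : ℝ) * Real.log L ≤ (K:ℝ) * Real.log (4*(r:ℝ)*x) := hBadcard
      _ ≤ (K:ℝ) * (2*L) := mul_le_mul_of_nonneg_left hlog4rx (by positivity)
      _ = 2*(K:ℝ)*L := by ring
  have hδle : m/(L-m) ≤ 2*m/L := by
    rw [div_le_div_iff₀ hLm (by linarith : (0:ℝ) < L)]
    nlinarith
  have hfinal : (Bad.card:ℝ) * (m/(L-m)) ≤ Real.log (1+ε) := by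
    have hδ0 : 0 ≤ m/(L-m) := div_nonneg hm0 hLm.le
    have hstep : (Bad.card:ℝ) * (m/(L-m)) ≤ (2*(K:ℝ)*L/Real.log L) * (2*m/L) :=
      mul_le_mul hBcardle hδle hδ0
        (div_nonneg (mul_nonneg (mul_nonneg (by norm_num) (Nat.cast_nonneg K))
          (by linarith : (0:ℝ) ≤ L)) hlogL0.le)
    have heq : (2*(K:ℝ)*L/Real.log L) * (2*m/L) = 4*m*(K:ℝ)/Real.log L := by
      have hLne : L ≠ 0 := by linarith
      field_simp
      ring
    have hA4 : 4*m*(K:ℝ)/Real.log (1+ε) ≤ A := by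
      have h1 : (0:ℝ) ≤ (r.factorial : ℝ) := by positivity
      simp only [hA]
      linarith
    have hlast : 4*m*(K:ℝ)/Real.log L ≤ Real.log (1+ε) := by
      rw [div_le_iff₀ hlogL0]
      have h6 := mul_le_mul_of_nonneg_left (le_trans hA4 hlogL) hlog1ε.le
      have h7 : Real.log (1+ε) * (4*m*(K:ℝ)/Real.log (1+ε)) = 4*m*(K:ℝ) := by
        field_simp
      rw [h7] at h6
      linarith
    calc (Bad.card:ℝ) * (m/(L-m)) ≤ (2*(K:ℝ)*L/Real.log L) * (2*m/L) := hstep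
      _ = 4*m*(K:ℝ)/Real.log L := heq
      _ ≤ Real.log (1+ε) := hlast
  have hDpow : D ^ Bad.card ≤ 1 + ε := by
    have hδ0 : 0 ≤ m/(L-m) := div_nonneg hm0 hLm.le
    have h1 : D ≤ Real.exp (m/(L-m)) := by
      rw [hD]
      linarith [Real.add_one_le_exp (m/(L-m))]
    have h2 : D ^ Bad.card ≤ Real.exp (m/(L-m)) ^ Bad.card :=
      pow_le_pow_left₀ (by linarith) h1 _
    have h3 : Real.exp (m/(L-m)) ^ Bad.card = Real.exp ((Bad.card:ℝ) * (m/(L-m))) := by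
      rw [← Real.exp_nat_mul]
    have h4 : Real.exp ((Bad.card:ℝ) * (m/(L-m))) ≤ Real.exp (Real.log (1+ε)) :=
      Real.exp_le_exp.2 hfinal
    rw [Real.exp_log (by linarith : (0:ℝ) < 1+ε)] at h4
    calc D ^ Bad.card ≤ Real.exp (m/(L-m)) ^ Bad.card := h2
      _ = Real.exp ((Bad.card:ℝ) * (m/(L-m))) := h3
      _ ≤ 1 + ε := h4
  have hupper : Q ≤ (1+ε) * G := by
    calc Q ≤ G * D ^ Bad.card := hQle
      _ ≤ G * (1+ε) := mul_le_mul_of_nonneg_left hDpow hGpos.le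
      _ = (1+ε) * G := mul_comm _ _
  -- conclude
  rw [hNum, hDen, hQeq]
  rw [abs_of_nonneg (by linarith : (0:ℝ) ≤ Q - G)]
  linarith
end

section
/- Let r ≥ 1 and let ψ_1(n) = n_1, and ψ_{(j,ℓ)}(n) = n_ℓ + j·r!·n_1 + m·x for 0 ≤ j ≤ r-1 and ℓ ∈ {2,3}, a system of 2r+1 affine-linear forms on Z^3. Then the local factor β_p := E_{n ∈ (Z/pZ)^3} ∏_i Λ_{Z/pZ}(ψ_i(n)) satisfies β_p = (p/(p-1))^{2(r-1)} for primes p ≤ r, and β_p = ((p-r)p^{r-1}/(p-1)^r)^2 for primes p > r. Consequently ∏_p β_p = α_r^2. -/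
/-- The local von Mangoldt function `Λ_{Z/pZ}`. -/
noncomputable def lamZ (p : ℕ) (b : ℤ) : ℝ :=
  if (p : ℤ) ∣ b then 0 else (p : ℝ) / ((p : ℝ) - 1)

/-- The local factor `β_p` for the system of `2r+1` forms `ψ₁(n) = n₁`,
`ψ_{(j,ℓ)}(n) = n_ℓ + j·r!·n₁ + m·x` for `0 ≤ j ≤ r-1`, `ℓ ∈ {2,3}`. -/
noncomputable def betaP3 (r : ℕ) (m x : ℤ) (p : ℕ) : ℝ :=
  (∑ n1 ∈ Finset.range p, ∑ n2 ∈ Finset.range p, ∑ n3 ∈ Finset.range p,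
    lamZ p (n1 : ℤ) * ∏ j ∈ Finset.range r,
      (lamZ p ((n2 : ℤ) + (j : ℤ) * (r.factorial : ℤ) * (n1 : ℤ) + m * x) *
        lamZ p ((n3 : ℤ) + (j : ℤ) * (r.factorial : ℤ) * (n1 : ℤ) + m * x))) / (p : ℝ) ^ 3

/-- The local factor of the singular series `α_r`. -/
noncomputable def alphaFactor (r p : ℕ) : ℝ :=
  if p ≤ r then ((p : ℝ) / ((p : ℝ) - 1)) ^ (r - 1)
  else ((p : ℝ) - (r : ℝ)) * (p : ℝ) ^ (r - 1) / ((p : ℝ) - 1) ^ r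

private lemma binom_upper (k : ℕ) {t : ℝ} (h0 : 0 ≤ t) (h1 : t ≤ 1) :
    (1 - t) ^ k ≤ 1 - k * t + (k : ℝ) ^ 2 * t ^ 2 := by
  induction k with
  | zero => simp
  | succ n ih =>
    have step : (1 - t) ^ (n + 1) ≤ (1 - n * t + (n : ℝ) ^ 2 * t ^ 2) * (1 - t) := by
      rw [pow_succ]
      exact mul_le_mul_of_nonneg_right ih (by linarith)
    push_cast
    nlinarith [step, mul_nonneg (sq_nonneg ((n : ℝ) * t)) h0, sq_nonneg t]

private lemma sum_prod_lam (p : ℕ) (hp : 0 < p) (r : ℕ) (c : ℕ → ℤ) :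
    ∑ n ∈ Finset.range p, ∏ j ∈ Finset.range r, lamZ p ((n : ℤ) + c j)
    = ((p : ℝ) - (((Finset.range r).image (fun j => ((-(c j)) % (p : ℤ)).toNat)).card : ℝ))
        * ((p : ℝ) / ((p : ℝ) - 1)) ^ r := by
  have hp' : (0 : ℤ) < p := by exact_mod_cast hp
  set B := (Finset.range r).image (fun j => ((-(c j)) % (p : ℤ)).toNat) with hB
  have hmemiff : ∀ n : ℕ, n < p →
      (n ∈ B ↔ ∃ j ∈ Finset.range r, (p : ℤ) ∣ (n : ℤ) + c j) := by
    intro n hn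
    simp only [hB, Finset.mem_image]
    constructor
    · rintro ⟨j, hj, rfl⟩
      refine ⟨j, hj, ?_⟩
      have h1 : (((-(c j)) % (p : ℤ)).toNat : ℤ) = (-(c j)) % (p : ℤ) :=
        Int.toNat_of_nonneg (Int.emod_nonneg _ (ne_of_gt hp'))
      rw [h1]
      have h2 := Int.emod_add_mul_ediv (-(c j)) (p : ℤ)
      exact ⟨-((-(c j)) / (p : ℤ)), by linarith⟩
    · rintro ⟨j, hj, hdvd⟩
      refine ⟨j, hj, ?_⟩
      have h3 : (n : ℤ) % p = n := Int.emod_eq_of_lt (by positivity) (by exact_mod_cast hn)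
      have h4 : (-(c j)) % (p : ℤ) = (n : ℤ) % p := by
        apply Int.emod_eq_emod_iff_emod_sub_eq_zero.mpr
        apply Int.emod_eq_zero_of_dvd
        have h5 : -(c j) - (n : ℤ) = -((n : ℤ) + c j) := by ring
        rw [h5]
        exact dvd_neg.mpr hdvd
      rw [h4, h3]
      simp
  have hBsub : B ⊆ Finset.range p := by
    intro b hb
    simp only [hB, Finset.mem_image] at hb
    obtain ⟨j, _, rfl⟩ := hb
    have h1 : (-(c j)) % (p : ℤ) < p := Int.emod_lt_of_pos _ hp'
    have h2 : 0 ≤ (-(c j)) % (p : ℤ) := Int.emod_nonneg _ (ne_of_gt hp')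
    exact Finset.mem_range.mpr (by omega)
  set K : ℝ := (p : ℝ) / ((p : ℝ) - 1) with hK
  have hterm : ∀ n ∈ Finset.range p,
      (∏ j ∈ Finset.range r, lamZ p ((n : ℤ) + c j)) = K ^ r - if n ∈ B then K ^ r else 0 := by
    intro n hn
    have hn' := Finset.mem_range.mp hn
    by_cases hmem : n ∈ B
    · obtain ⟨j, hj, hdvd⟩ := (hmemiff n hn').mp hmem
      have h0 : lamZ p ((n : ℤ) + c j) = 0 := by simp [lamZ, hdvd]
      rw [Finset.prod_eq_zero hj h0, if_pos hmem]
      ring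
    · have hnd : ∀ j ∈ Finset.range r, lamZ p ((n : ℤ) + c j) = K := by
        intro j hj
        have hd : ¬ (p : ℤ) ∣ (n : ℤ) + c j :=
          fun hd => hmem ((hmemiff n hn').mpr ⟨j, hj, hd⟩)
        simp [lamZ, hd, hK]
      rw [Finset.prod_congr rfl hnd, Finset.prod_const, Finset.card_range, if_neg hmem]
      ring
  rw [Finset.sum_congr rfl hterm, Finset.sum_sub_distrib, Finset.sum_const, Finset.card_range,
    Finset.sum_ite_mem, Finset.inter_eq_right.mpr hBsub, Finset.sum_const]
  have hcard : (B.card : ℝ) ≤ (p : ℝ) := by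
    exact_mod_cast le_trans (Finset.card_le_card hBsub) (le_of_eq (Finset.card_range p))
  simp only [nsmul_eq_mul]
  ring

private lemma sum_lam (p : ℕ) (hp : 0 < p) :
    ∑ n ∈ Finset.range p, lamZ p (n : ℤ) = ((p : ℝ) - 1) * ((p : ℝ) / ((p : ℝ) - 1)) := by
  have h := sum_prod_lam p hp 1 (fun _ => (0 : ℤ))
  simp only [add_zero, Finset.prod_range_one, neg_zero, Int.zero_emod, Int.toNat_zero,
    Finset.range_one, Finset.image_singleton, Finset.card_singleton, Nat.cast_one,
    Finset.prod_singleton, pow_one] at h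
  exact h

private lemma part1 (r : ℕ) (hr : 1 ≤ r) (m x : ℤ) {p : ℕ} (hp : p.Prime) :
    betaP3 r m x p =
      (if p ≤ r then ((p : ℝ) / ((p : ℝ) - 1)) ^ (2 * (r - 1))
      else (((p : ℝ) - (r : ℝ)) * (p : ℝ) ^ (r - 1) / ((p : ℝ) - 1) ^ r) ^ 2) := by
  obtain ⟨s, rfl⟩ : ∃ s, r = s + 1 := ⟨r - 1, (Nat.succ_pred_eq_of_pos hr).symm⟩
  simp only [Nat.add_sub_cancel]
  have hp0 : 0 < p := hp.pos
  have hq1 : (1 : ℝ) < (p : ℝ) := by exact_mod_cast hp.one_lt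
  have hq0 : (p : ℝ) ≠ 0 := by linarith
  have hqm : (p : ℝ) - 1 ≠ 0 := by linarith
  have hbeta : betaP3 (s + 1) m x p
      = (∑ n1 ∈ Finset.range p, lamZ p (n1 : ℤ) *
          (∑ n ∈ Finset.range p, ∏ j ∈ Finset.range (s + 1),
            lamZ p ((n : ℤ) + ((j : ℤ) * (((s + 1).factorial : ℕ) : ℤ) * (n1 : ℤ) + m * x))) ^ 2)
          / (p : ℝ) ^ 3 := by
    unfold betaP3
    congr 1
    refine Finset.sum_congr rfl fun n1 _ => ?_
    simp only [Finset.prod_mul_distrib, add_assoc]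
    rw [sq, Finset.sum_mul_sum, Finset.mul_sum]
    refine Finset.sum_congr rfl fun n2 _ => ?_
    rw [Finset.mul_sum]
  by_cases hpr : p ≤ s + 1
  · -- small primes
    have hfac : (p : ℤ) ∣ (((s + 1).factorial : ℕ) : ℤ) :=
      Int.natCast_dvd_natCast.mpr (Nat.dvd_factorial hp0 hpr)
    have hS : ∀ n1 : ℕ,
        (∑ n ∈ Finset.range p, ∏ j ∈ Finset.range (s + 1),
          lamZ p ((n : ℤ) + ((j : ℤ) * (((s + 1).factorial : ℕ) : ℤ) * (n1 : ℤ) + m * x)))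
        = ((p : ℝ) - 1) * ((p : ℝ) / ((p : ℝ) - 1)) ^ (s + 1) := by
      intro n1
      rw [sum_prod_lam p hp0 (s + 1) (fun j : ℕ => (j : ℤ) * (((s + 1).factorial : ℕ) : ℤ) * (n1 : ℤ) + m * x)]
      have himg : (Finset.range (s + 1)).image
          (fun j : ℕ => ((-((j : ℤ) * (((s + 1).factorial : ℕ) : ℤ) * (n1 : ℤ) + m * x)) % (p : ℤ)).toNat)
          = {((-(m * x)) % (p : ℤ)).toNat} := by
        have hconst : ∀ j ∈ Finset.range (s + 1),
            ((-((j : ℤ) * (((s + 1).factorial : ℕ) : ℤ) * (n1 : ℤ) + m * x)) % (p : ℤ)).toNat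
            = ((-(m * x)) % (p : ℤ)).toNat := by
          intro j _
          congr 1
          apply Int.emod_eq_emod_iff_emod_sub_eq_zero.mpr
          apply Int.emod_eq_zero_of_dvd
          have he : -((j : ℤ) * (((s + 1).factorial : ℕ) : ℤ) * (n1 : ℤ) + m * x) - (-(m * x))
              = (-((j : ℤ) * (n1 : ℤ))) * (((s + 1).factorial : ℕ) : ℤ) := by ring
          rw [he]
          exact Dvd.dvd.mul_left hfac _
        rw [Finset.image_congr hconst, Finset.image_const Finset.nonempty_range_add_one]
      rw [himg]
      norm_num
    rw [hbeta, if_pos hpr]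
    simp only [hS]
    rw [← Finset.sum_mul, sum_lam p hp0]
    have hbne : ((p : ℝ) - 1) ^ s ≠ 0 := pow_ne_zero _ hqm
    have hane : (p : ℝ) ^ s ≠ 0 := pow_ne_zero _ hq0
    rw [mul_comm 2 s]
    simp only [div_pow, pow_succ, pow_mul]
    field_simp
  · -- large primes
    push_neg at hpr
    have hS : ∀ n1 : ℕ, n1 ≠ 0 → n1 < p →
        (∑ n ∈ Finset.range p, ∏ j ∈ Finset.range (s + 1),
          lamZ p ((n : ℤ) + ((j : ℤ) * (((s + 1).factorial : ℕ) : ℤ) * (n1 : ℤ) + m * x)))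
        = ((p : ℝ) - ((s + 1 : ℕ) : ℝ)) * ((p : ℝ) / ((p : ℝ) - 1)) ^ (s + 1) := by
      intro n1 hn0 hn1
      rw [sum_prod_lam p hp0 (s + 1) (fun j : ℕ => (j : ℤ) * (((s + 1).factorial : ℕ) : ℤ) * (n1 : ℤ) + m * x)]
      have hinj : Set.InjOn
          (fun j : ℕ => ((-((j : ℤ) * (((s + 1).factorial : ℕ) : ℤ) * (n1 : ℤ) + m * x)) % (p : ℤ)).toNat)
          ↑(Finset.range (s + 1)) := by
        intro j hj j' hj' heq
        simp only [Finset.coe_range, Set.mem_Iio] at hj hj'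
        have hp' : (0 : ℤ) < p := by exact_mod_cast hp0
        have hnn : ∀ a : ℤ, 0 ≤ a % (p : ℤ) := fun a => Int.emod_nonneg _ (ne_of_gt hp')
        have heq' : (-((j : ℤ) * (((s + 1).factorial : ℕ) : ℤ) * (n1 : ℤ) + m * x)) % (p : ℤ)
            = (-((j' : ℤ) * (((s + 1).factorial : ℕ) : ℤ) * (n1 : ℤ) + m * x)) % (p : ℤ) := by
          rw [← Int.toNat_of_nonneg (hnn (-((j : ℤ) * (((s + 1).factorial : ℕ) : ℤ) * (n1 : ℤ) + m * x))),
            ← Int.toNat_of_nonneg (hnn (-((j' : ℤ) * (((s + 1).factorial : ℕ) : ℤ) * (n1 : ℤ) + m * x)))]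
          exact_mod_cast heq
        have hdvd : (p : ℤ) ∣ ((j' : ℤ) - (j : ℤ)) * (((s + 1).factorial : ℕ) : ℤ) * (n1 : ℤ) := by
          have h6 := Int.emod_eq_emod_iff_emod_sub_eq_zero.mp heq'
          have h7 := Int.dvd_of_emod_eq_zero h6
          have he : -((j : ℤ) * (((s + 1).factorial : ℕ) : ℤ) * (n1 : ℤ) + m * x)
              - -((j' : ℤ) * (((s + 1).factorial : ℕ) : ℤ) * (n1 : ℤ) + m * x)
              = ((j' : ℤ) - (j : ℤ)) * (((s + 1).factorial : ℕ) : ℤ) * (n1 : ℤ) := by ring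
          rwa [he] at h7
        -- transfer to ℕ via natAbs
        have habs : p ∣ ((j' : ℤ) - (j : ℤ)).natAbs * (s + 1).factorial * n1 := by
          have h8 := Int.natCast_dvd.mp hdvd
          simpa [Int.natAbs_mul] using h8
        have hnd1 : ¬ p ∣ (s + 1).factorial := fun h =>
          absurd ((Nat.Prime.dvd_factorial hp).mp h) (by omega)
        have hnd2 : ¬ p ∣ n1 := fun h => absurd (Nat.le_of_dvd (Nat.pos_of_ne_zero hn0) h) (by omega)
        have : p ∣ ((j' : ℤ) - (j : ℤ)).natAbs := by
          rcases (Nat.Prime.dvd_mul hp).mp habs with h | h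
          · rcases (Nat.Prime.dvd_mul hp).mp h with h' | h'
            · exact h'
            · exact absurd h' hnd1
          · exact absurd h hnd2
        have hlt : ((j' : ℤ) - (j : ℤ)).natAbs < p := by omega
        have : ((j' : ℤ) - (j : ℤ)).natAbs = 0 := by
          rcases Nat.eq_zero_or_pos (((j' : ℤ) - (j : ℤ)).natAbs) with h | h
          · exact h
          · exact absurd (Nat.le_of_dvd h this) (by omega)
        omega
      rw [Finset.card_image_of_injOn hinj, Finset.card_range]
    have hsum : ∑ n1 ∈ Finset.range p, lamZ p (n1 : ℤ) *
          (∑ n ∈ Finset.range p, ∏ j ∈ Finset.range (s + 1),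
            lamZ p ((n : ℤ) + ((j : ℤ) * (((s + 1).factorial : ℕ) : ℤ) * (n1 : ℤ) + m * x))) ^ 2
        = ((p : ℝ) - 1) * (((p : ℝ) / ((p : ℝ) - 1)) *
            (((p : ℝ) - ((s + 1 : ℕ) : ℝ)) * ((p : ℝ) / ((p : ℝ) - 1)) ^ (s + 1)) ^ 2) := by
      have hterm : ∀ n1 ∈ Finset.range p, lamZ p (n1 : ℤ) *
          (∑ n ∈ Finset.range p, ∏ j ∈ Finset.range (s + 1),
            lamZ p ((n : ℤ) + ((j : ℤ) * (((s + 1).factorial : ℕ) : ℤ) * (n1 : ℤ) + m * x))) ^ 2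
          = (((p : ℝ) / ((p : ℝ) - 1)) *
            (((p : ℝ) - ((s + 1 : ℕ) : ℝ)) * ((p : ℝ) / ((p : ℝ) - 1)) ^ (s + 1)) ^ 2)
            - if n1 = 0 then (((p : ℝ) / ((p : ℝ) - 1)) *
            (((p : ℝ) - ((s + 1 : ℕ) : ℝ)) * ((p : ℝ) / ((p : ℝ) - 1)) ^ (s + 1)) ^ 2) else 0 := by
        intro n1 hn1
        have hn1' := Finset.mem_range.mp hn1
        by_cases h0 : n1 = 0
        · subst h0
          have : lamZ p ((0 : ℕ) : ℤ) = 0 := by simp [lamZ]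
          rw [this]
          simp
        · have hlam : lamZ p (n1 : ℤ) = (p : ℝ) / ((p : ℝ) - 1) := by
            have : ¬ (p : ℤ) ∣ (n1 : ℤ) := by
              rw [Int.natCast_dvd_natCast]
              exact fun h => absurd (Nat.le_of_dvd (Nat.pos_of_ne_zero h0) h) (by omega)
            simp [lamZ, this]
          rw [hS n1 h0 hn1', hlam, if_neg h0]
          ring
      rw [Finset.sum_congr rfl hterm, Finset.sum_sub_distrib, Finset.sum_const,
        Finset.card_range, Finset.sum_ite_eq' (Finset.range p) 0]
      rw [if_pos (Finset.mem_range.mpr hp0)]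
      simp only [nsmul_eq_mul]
      ring
    rw [hbeta, hsum, if_neg (by omega)]
    have hbne : ((p : ℝ) - 1) ^ s ≠ 0 := pow_ne_zero _ hqm
    have hane : (p : ℝ) ^ s ≠ 0 := pow_ne_zero _ hq0
    simp only [div_pow, pow_succ]
    push_cast
    field_simp

private lemma alpha_pos (r : ℕ) {p : ℕ} (hp : p.Prime) : 0 < alphaFactor r p := by
  have hq1 : (1 : ℝ) < (p : ℝ) := by exact_mod_cast hp.one_lt
  unfold alphaFactor
  split_ifs with h
  · exact pow_pos (div_pos (by linarith) (by linarith)) _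
  · push_neg at h
    have h0 : (r : ℝ) < (p : ℝ) := by exact_mod_cast h
    have h1 : (0:ℝ) < (p : ℝ) - r := by linarith
    have h2 : (0:ℝ) < (p : ℝ) ^ (r-1) := pow_pos (by linarith) _
    have h3 : (0:ℝ) < ((p : ℝ) - 1) ^ r := pow_pos (by linarith) _
    exact div_pos (mul_pos h1 h2) h3

set_option maxHeartbeats 1000000 in
private lemma alpha_log_bound (r : ℕ) (hr : 1 ≤ r) {p : ℕ} (hp : p.Prime)
    (hbig : 2 * r + 2 ≤ p) :
    |Real.log (alphaFactor r p)| ≤ 4 * (r : ℝ) ^ 2 * (1 / (p : ℝ) ^ 2) := by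
  obtain ⟨s, rfl⟩ : ∃ s, r = s + 1 := ⟨r - 1, (Nat.succ_pred_eq_of_pos hr).symm⟩
  have hpr : ¬ p ≤ s + 1 := by omega
  have hq1 : (1 : ℝ) < (p : ℝ) := by exact_mod_cast hp.one_lt
  have hq0 : (0:ℝ) < (p : ℝ) := by linarith
  have hq0' : (p:ℝ) ≠ 0 := ne_of_gt hq0
  set q : ℝ := (p : ℝ) with hq
  clear_value q
  set ρ : ℝ := ((s + 1 : ℕ) : ℝ) with hρ
  clear_value ρ
  have hρval : ρ = (s : ℝ) + 1 := by rw [hρ]; push_cast; ring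
  have hqbig : 2 * ρ + 2 ≤ q := by rw [hρ, hq]; exact_mod_cast hbig
  have hρ1 : (1:ℝ) ≤ ρ := by
    have : (0:ℝ) ≤ (s:ℝ) := Nat.cast_nonneg s
    rw [hρval]; linarith
  have hqmρ : 0 < q - ρ := by linarith
  have hqm1 : 0 < q - 1 := by linarith
  set A : ℝ := (q - ρ) * q ^ s with hA
  clear_value A
  set B : ℝ := (q - 1) ^ (s + 1) with hB
  clear_value B
  have hApos : 0 < A := by rw [hA]; exact mul_pos hqmρ (pow_pos hq0 _)
  have hBpos : 0 < B := by rw [hB]; exact pow_pos hqm1 _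
  have hqpow : 0 < q ^ (s+1) := pow_pos hq0 _
  -- Bernoulli : A ≤ B
  have hber : 1 + ρ * (-(1/q)) ≤ (1 + (-(1/q))) ^ (s+1) := by
    rw [hρ]
    have hd1 : 1/q ≤ 1 := by rw [div_le_one hq0]; linarith
    exact one_add_mul_le_pow (by linarith) (s+1)
  have hAB : A ≤ B := by
    have h1 : (1 + ρ * (-(1/q))) * q ^ (s+1) ≤ (1 + (-(1/q))) ^ (s+1) * q ^ (s+1) :=
      mul_le_mul_of_nonneg_right hber (le_of_lt hqpow)
    have h2 : (1 + (-(1/q))) ^ (s+1) * q ^ (s+1) = B := by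
      rw [hB, ← mul_pow]
      congr 1
      field_simp
      ring
    have h3 : (1 + ρ * (-(1/q))) * q ^ (s+1) = A := by
      rw [hA, pow_succ]
      field_simp
      ring
    linarith
  -- binomial upper : B * q² ≤ A * q² + ρ² q^(s+1)
  have hbin := binom_upper (s+1) (t := 1/q) (by positivity)
    (by rw [div_le_one hq0]; linarith)
  have hBA : B * q ^ 2 ≤ A * q ^ 2 + ρ ^ 2 * q ^ (s+1) := by
    have hq3 : (0:ℝ) < q ^ (s+3) := pow_pos hq0 _
    have h1 : (1 - 1/q) ^ (s+1) * q ^ (s+3)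
        ≤ (1 - (s+1 : ℕ) * (1/q) + ((s+1 : ℕ) : ℝ)^2 * (1/q)^2) * q ^ (s+3) :=
      mul_le_mul_of_nonneg_right hbin (le_of_lt hq3)
    have h2 : (1 - 1/q) ^ (s+1) * q ^ (s+3) = B * q ^ 2 := by
      have e : q ^ (s+3) = q ^ (s+1) * q ^ 2 := by ring
      rw [e, ← mul_assoc, ← mul_pow, hB]
      congr 2
      field_simp
    have h3 : (1 - (s+1 : ℕ) * (1/q) + ((s+1 : ℕ) : ℝ)^2 * (1/q)^2) * q ^ (s+3)
        = A * q ^ 2 + ρ ^ 2 * q ^ (s+1) := by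
      rw [hA, ← hρ]
      have e1 : q ^ (s+3) = q ^ s * q ^ 3 := by ring
      have e2 : q ^ (s+1) = q ^ s * q := by ring
      rw [e1, e2]
      field_simp
    linarith
  -- B ≥ q^(s+1)/2
  have hhalf : q ^ (s+1) / 2 ≤ B := by
    have h1 : q / 2 ≤ q - ρ := by linarith
    have h3 : (q/2) * q^s ≤ A := by
      rw [hA]
      exact mul_le_mul_of_nonneg_right h1 (le_of_lt (pow_pos hq0 _))
    have h2 : q ^ (s+1) / 2 = (q/2) * q ^ s := by rw [pow_succ]; ring
    linarith
  set α : ℝ := A / B with hαdef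
  clear_value α
  have hαpos : 0 < α := by rw [hαdef]; exact div_pos hApos hBpos
  have hα1 : α ≤ 1 := by rw [hαdef, div_le_one hBpos]; exact hAB
  have h1mα : 1 - α ≤ 2 * ρ ^ 2 / q ^ 2 := by
    have e1 : 1 - α = (B - A)/B := by rw [hαdef]; field_simp
    rw [e1, div_le_div_iff₀ hBpos (pow_pos hq0 2)]
    have hmulhint : ρ^2 * (q^(s+1)/2) ≤ ρ^2 * B := mul_le_mul_of_nonneg_left hhalf (sq_nonneg ρ)
    nlinarith [hBA, hmulhint]
  have hρq : 2 * ρ ^ 2 / q ^ 2 ≤ 1 / 2 := by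
    rw [div_le_div_iff₀ (pow_pos hq0 2) (by norm_num : (0:ℝ) < 2)]
    nlinarith [hρ1, hqbig, sq_nonneg (q - 2*ρ - 2), sq_nonneg ρ]
  have hαhalf : 1/2 ≤ α := by linarith
  -- now the log bound
  have hαval : alphaFactor (s+1) p = α := by
    rw [hαdef, hA, hB, hq, hρ]
    unfold alphaFactor
    rw [if_neg hpr]
    norm_num
  rw [hαval]
  have hlog : Real.log α ≤ 0 := Real.log_nonpos (le_of_lt hαpos) hα1
  rw [abs_of_nonpos hlog]
  have h4 : -Real.log α = Real.log α⁻¹ := (Real.log_inv α).symm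
  have h5 : Real.log α⁻¹ ≤ α⁻¹ - 1 := Real.log_le_sub_one_of_pos (inv_pos.mpr hαpos)
  have hinv : α⁻¹ * α = 1 := inv_mul_cancel₀ (ne_of_gt hαpos)
  have h6 : α⁻¹ - 1 ≤ 2 * (1 - α) := by
    have e : α⁻¹ - 1 = (1 - α)/α := by field_simp
    rw [e, div_le_iff₀ hαpos]
    linarith [mul_nonneg (by linarith : (0:ℝ) ≤ 1 - α) (by linarith : (0:ℝ) ≤ 2*α - 1)]
  have h7 : -Real.log α ≤ 2 * (1 - α) := by rw [h4]; linarith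
  have h8 : 2 * (1 - α) ≤ 2 * (2 * ρ ^ 2 / q ^ 2) :=
    mul_le_mul_of_nonneg_left h1mα (by norm_num)
  have h9 : 2 * ((2:ℝ) * ρ ^ 2 / q ^ 2) = 4 * ρ ^ 2 * (1 / q ^ 2) := by ring
  linarith [h7, h8, h9]

set_option maxHeartbeats 1000000 in
private lemma alpha_log_summable (r : ℕ) (hr : 1 ≤ r) :
    Summable (fun p : Nat.Primes => Real.log (alphaFactor r (p : ℕ))) := by
  set F : ℕ → ℝ := fun n => if n.Prime then Real.log (alphaFactor r n) else 0 with hF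
  have hFsummable : Summable F := by
    have hg : Summable (fun n : ℕ => 4 * (r:ℝ)^2 * (1 / ((n + (2*r+2) : ℕ) : ℝ)^2)) := by
      apply Summable.mul_left
      have h0 : Summable (fun n : ℕ => 1 / ((n:ℝ))^2) :=
        Real.summable_one_div_nat_pow.mpr (by norm_num)
      exact (summable_nat_add_iff (2*r+2)).mpr h0
    have habs : Summable (fun n : ℕ => |F (n + (2*r+2))|) := by
      apply Summable.of_nonneg_of_le (fun n => abs_nonneg _) _ hg
      intro n
      by_cases hpn : (n + (2*r+2)).Prime
      · have hb := alpha_log_bound r hr hpn (by omega)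
        simp only [hF, if_pos hpn]
        exact hb
      · simp only [hF, if_neg hpn, abs_zero]
        positivity
    have h1 : Summable (fun n => F (n + (2*r+2))) := summable_abs_iff.mp habs
    exact (summable_nat_add_iff (2*r+2)).mp h1
  have h2 : Summable (F ∘ (fun p : Nat.Primes => (p : ℕ))) :=
    hFsummable.comp_injective Nat.Primes.coe_nat_injective
  exact h2.congr (fun p => by simp [hF, Function.comp, p.2])

private lemma alpha_multipliable (r : ℕ) (hr : 1 ≤ r) :
    Multipliable (fun p : Nat.Primes => alphaFactor r (p : ℕ)) :=
  Real.multipliable_of_summable_log (fun p => alpha_pos r p.2) (alpha_log_summable r hr)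

/-- Computation of the local factors for the three-variable system: `β_p` equals
`(p/(p-1))^{2(r-1)}` for `p ≤ r` and `((p-r)p^{r-1}/(p-1)^r)²` for `p > r`;
consequently `∏_p β_p = α_r²`. -/
theorem stmt_10 (r : ℕ) (hr : 1 ≤ r) (m x : ℤ) :
    (∀ p : ℕ, p.Prime → betaP3 r m x p =
      (if p ≤ r then ((p : ℝ) / ((p : ℝ) - 1)) ^ (2 * (r - 1))
      else (((p : ℝ) - (r : ℝ)) * (p : ℝ) ^ (r - 1) / ((p : ℝ) - 1) ^ r) ^ 2)) ∧
    (∏' p : Nat.Primes, betaP3 r m x (p : ℕ)) =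
      (∏' p : Nat.Primes, alphaFactor r (p : ℕ)) ^ 2 := by
  have part1all : ∀ p : ℕ, p.Prime → betaP3 r m x p =
      (if p ≤ r then ((p : ℝ) / ((p : ℝ) - 1)) ^ (2 * (r - 1))
      else (((p : ℝ) - (r : ℝ)) * (p : ℝ) ^ (r - 1) / ((p : ℝ) - 1) ^ r) ^ 2) :=
    fun p hp => part1 r hr m x hp
  refine ⟨part1all, ?_⟩
  have hmult := alpha_multipliable r hr
  have hsq : ∀ p : Nat.Primes, betaP3 r m x (p : ℕ)
      = alphaFactor r (p : ℕ) * alphaFactor r (p : ℕ) := by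
    intro p
    rw [part1all p p.2]
    unfold alphaFactor
    split_ifs with h
    · rw [← pow_add]
      congr 1
      omega
    · exact sq _
  calc (∏' p : Nat.Primes, betaP3 r m x (p : ℕ))
      = (∏' p : Nat.Primes, alphaFactor r (p : ℕ) * alphaFactor r (p : ℕ)) :=
        tprod_congr hsq
    _ = (∏' p : Nat.Primes, alphaFactor r (p : ℕ)) *
        (∏' p : Nat.Primes, alphaFactor r (p : ℕ)) := Multipliable.tprod_mul hmult hmult
    _ = (∏' p : Nat.Primes, alphaFactor r (p : ℕ)) ^ 2 := (sq _).symm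
end
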